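/- arXiv:2206.05925 — 3 statements merged into one kernel-verified Lean document; each statement's English description precedes it below -/
import Mathlib

section
/- Let (L, [·,·]) be a complex Lie algebra and let ∘ be a commutative post-Lie algebra structure on L, i.e. a bilinear product satisfying x ∘ y = y ∘ x, [x, y] ∘ z = x ∘ (y ∘ z) − y ∘ (x ∘ z), and x ∘ [y, z] = [x ∘ y, z] + [y, x ∘ z] for all x, y, z ∈ L. Then the bilinear map f : L × L → L defined by f(x, y) = x ∘ y is a symmetric biderivation of L, i.e. f([x,y], z) = [x, f(y,z)] − [y, f(x,z)], f(x, [y,z]) = [y, f(x,z)] − [z, f(x,y)], and f(x,y) = f(y,x) for all x, y, z ∈ L. -/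
theorem postLie_gives_symmetric_biderivation
    (L : Type) [LieRing L] [LieAlgebra ℂ L]
    (mul : L →ₗ[ℂ] L →ₗ[ℂ] L)
    (hcomm : ∀ x y : L, mul x y = mul y x)
    (hpost1 : ∀ x y z : L, mul ⁅x, y⁆ z = mul x (mul y z) - mul y (mul x z))
    (hpost2 : ∀ x y z : L, mul x ⁅y, z⁆ = ⁅mul x y, z⁆ + ⁅y, mul x z⁆) :
    (∀ x y z : L, mul ⁅x, y⁆ z = ⁅x, mul y z⁆ - ⁅y, mul x z⁆) ∧
    (∀ x y z : L, mul x ⁅y, z⁆ = ⁅y, mul x z⁆ - ⁅z, mul x y⁆) ∧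
    (∀ x y : L, mul x y = mul y x) := by
  refine ⟨?_, ?_, hcomm⟩
  · intro x y z
    calc mul ⁅x, y⁆ z = mul z ⁅x, y⁆ := hcomm _ _
      _ = ⁅mul z x, y⁆ + ⁅x, mul z y⁆ := hpost2 _ _ _
      _ = ⁅x, mul y z⁆ - ⁅y, mul x z⁆ := by
          rw [hcomm z x, hcomm z y, ← lie_skew (mul x z) y]; abel
  · intro x y z
    rw [hpost2, ← lie_skew (mul x y) z]; abel
end

section
/- Every commutative post-Lie superalgebra structure ∘ on the super Virasoro algebra SVir is trivial, i.e. x ∘ y = 0 for all x, y ∈ SVir. -/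
private def iL (m : ℤ) : (ℤ ⊕ Unit) ⊕ ℤ := Sum.inl (Sum.inl m)
private def iC : (ℤ ⊕ Unit) ⊕ ℤ := Sum.inl (Sum.inr ())
private def iG (s : ℤ) : (ℤ ⊕ Unit) ⊕ ℤ := Sum.inr s

private def wtI : (ℤ ⊕ Unit) ⊕ ℤ → ℂ
  | Sum.inl (Sum.inl m) => -m
  | Sum.inl (Sum.inr _) => 0
  | Sum.inr s => -s

private def parI : (ℤ ⊕ Unit) ⊕ ℤ → ZMod 2
  | Sum.inl _ => 0
  | Sum.inr _ => 1

@[simp] private lemma wtI_iL (m : ℤ) : wtI (iL m) = -m := rfl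
@[simp] private lemma wtI_iC : wtI iC = 0 := rfl
@[simp] private lemma wtI_iG (s : ℤ) : wtI (iG s) = -s := rfl
@[simp] private lemma parI_iL (m : ℤ) : parI (iL m) = 0 := rfl
@[simp] private lemma parI_iC : parI iC = 0 := rfl
@[simp] private lemma parI_iG (s : ℤ) : parI (iG s) = 1 := rfl
@[simp] private lemma iL_inj {a b : ℤ} : iL a = iL b ↔ a = b := by simp [iL]
@[simp] private lemma iG_inj {a b : ℤ} : iG a = iG b ↔ a = b := by simp [iG]
@[simp] private lemma iL_ne_iC (a : ℤ) : iL a ≠ iC := by simp [iL, iC]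
@[simp] private lemma iC_ne_iL (a : ℤ) : iC ≠ iL a := by simp [iL, iC]
@[simp] private lemma iL_ne_iG (a b : ℤ) : iL a ≠ iG b := by simp [iL, iG]
@[simp] private lemma iG_ne_iL (a b : ℤ) : iG a ≠ iL b := by simp [iL, iG]
@[simp] private lemma iC_ne_iG (b : ℤ) : iC ≠ iG b := by simp [iC, iG]
@[simp] private lemma iG_ne_iC (b : ℤ) : iG b ≠ iC := by simp [iC, iG]

theorem postLie_SVir_trivial
    (V : Type) [AddCommGroup V] [Module ℂ V]
    (bV : Module.Basis ((ℤ ⊕ Unit) ⊕ ℤ) ℂ V)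
    (br : V →ₗ[ℂ] V →ₗ[ℂ] V)
    (L : ℤ → V) (Cc : V) (G : ℤ → V)
    (hLdef : ∀ m : ℤ, L m = bV (Sum.inl (Sum.inl m)))
    (hCdef : Cc = bV (Sum.inl (Sum.inr ())))
    (hGdef : ∀ r : ℤ, G r = bV (Sum.inr r))
    (Vsub : ZMod 2 → Submodule ℂ V)
    (hV0 : Vsub 0 = Submodule.span ℂ (Set.range (fun i : ℤ ⊕ Unit => bV (Sum.inl i))))
    (hV1 : Vsub 1 = Submodule.span ℂ (Set.range (fun j : ℤ => bV (Sum.inr j))))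
    (sgn : ZMod 2 → ℂ) (hsgn : ∀ p : ZMod 2, sgn p = if p = 1 then -1 else 1)
    (hLL : ∀ m n : ℤ, br (L m) (L n) = ((m : ℂ) - n) • L (m + n) +
      (if m + n = 0 then ((m : ℂ) ^ 3 - m) / 12 else 0) • Cc)
    (hLG : ∀ m r : ℤ, br (L m) (G r) = ((m : ℂ) / 2 - r) • G (m + r))
    (hGG : ∀ r s : ℤ, br (G r) (G s) = (2 : ℂ) • L (r + s) +
      (if r + s = 0 then ((r : ℂ) ^ 2 - 1 / 4) / 3 else 0) • Cc)
    (hLC : ∀ m : ℤ, br (L m) Cc = 0)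
    (hGC : ∀ r : ℤ, br (G r) Cc = 0)
    (hskew : ∀ p q : ZMod 2, ∀ x ∈ Vsub p, ∀ y ∈ Vsub q,
      br x y = (-(sgn (p * q))) • br y x)
    (circ : V →ₗ[ℂ] V →ₗ[ℂ] V)
    (hcomm : ∀ p q : ZMod 2, ∀ x ∈ Vsub p, ∀ y ∈ Vsub q, circ x y = sgn (p * q) • circ y x)
    (hpost1 : ∀ p q t : ZMod 2, ∀ x ∈ Vsub p, ∀ y ∈ Vsub q, ∀ z ∈ Vsub t,
      circ (br x y) z = circ x (circ y z) - sgn (p * q) • circ y (circ x z))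
    (hpost2 : ∀ p q t : ZMod 2, ∀ x ∈ Vsub p, ∀ y ∈ Vsub q, ∀ z ∈ Vsub t,
      circ x (br y z) = br (circ x y) z + sgn (p * q) • br y (circ x z)) :
    ∀ x y : V, circ x y = 0 := by
  classical
  -- memberships
  have memb : ∀ j, bV j ∈ Vsub (parI j) := by
    intro j
    rcases j with (m | u) | s
    · rw [show parI (Sum.inl (Sum.inl m)) = 0 from rfl, hV0]
      exact Submodule.subset_span ⟨Sum.inl m, rfl⟩
    · rw [show parI (Sum.inl (Sum.inr u)) = 0 from rfl, hV0]
      exact Submodule.subset_span ⟨Sum.inr u, rfl⟩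
    · rw [show parI (Sum.inr s) = 1 from rfl, hV1]
      exact Submodule.subset_span ⟨s, rfl⟩
  have s0 : sgn 0 = 1 := by rw [hsgn, if_neg (by decide)]
  have reprS : ∀ (a b : (ℤ ⊕ Unit) ⊕ ℤ), bV.repr (bV a) b = if a = b then 1 else 0 := by
    intro a b
    rw [Module.Basis.repr_self, Finsupp.single_apply]
  -- bracket values on basis vectors
  have BLL : ∀ s m : ℤ, br (bV (iL s)) (bV (iL m)) = ((s:ℂ) - m) • bV (iL (s+m)) +
      (if s + m = 0 then ((s:ℂ)^3 - s)/12 else 0) • bV iC := by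
    intro s m
    rw [show bV (iL s) = L s from (hLdef s).symm, show bV (iL m) = L m from (hLdef m).symm,
      hLL, hLdef, hCdef]
    rfl
  have BLG : ∀ s m : ℤ, br (bV (iL s)) (bV (iG m)) = ((s:ℂ)/2 - m) • bV (iG (s+m)) := by
    intro s m
    rw [show bV (iL s) = L s from (hLdef s).symm, show bV (iG m) = G m from (hGdef m).symm,
      hLG, hGdef]
    rfl
  have BGL : ∀ s m : ℤ, br (bV (iG s)) (bV (iL m)) = ((s:ℂ) - m/2) • bV (iG (s+m)) := by
    intro s m
    have h := hskew 1 0 (bV (iG s)) (memb (iG s)) (bV (iL m)) (memb (iL m))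
    rw [mul_zero, s0] at h
    rw [h, show bV (iL m) = L m from (hLdef m).symm,
      show bV (iG s) = G s from (hGdef s).symm, hLG, hGdef, smul_smul,
      show m + s = s + m from by omega]
    congr 1
    ring
  have BGG : ∀ s m : ℤ, br (bV (iG s)) (bV (iG m)) = (2:ℂ) • bV (iL (s+m)) +
      (if s + m = 0 then ((s:ℂ)^2 - 1/4)/3 else 0) • bV iC := by
    intro s m
    rw [show bV (iG s) = G s from (hGdef s).symm, show bV (iG m) = G m from (hGdef m).symm,
      hGG, hLdef, hCdef]
    rfl
  have BLC : ∀ s : ℤ, br (bV (iL s)) (bV iC) = 0 := by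
    intro s
    rw [show bV (iL s) = L s from (hLdef s).symm, show bV iC = Cc from hCdef.symm, hLC]
  have BGC : ∀ s : ℤ, br (bV (iG s)) (bV iC) = 0 := by
    intro s
    rw [show bV (iG s) = G s from (hGdef s).symm, show bV iC = Cc from hCdef.symm, hGC]
  have BCC : br (bV iC) (bV iC) = 0 := by
    have h := hskew 0 0 (bV iC) (memb iC) (bV iC) (memb iC)
    rw [mul_zero, s0] at h
    have h2 : br (bV iC) (bV iC) + br (bV iC) (bV iC) = 0 := by
      nth_rewrite 1 [h]; simp
    have h3 : (2:ℂ) • br (bV iC) (bV iC) = 0 := by rw [two_smul]; exact h2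
    simpa using (smul_eq_zero.mp h3).resolve_left (by norm_num)
  have BCL : ∀ m : ℤ, br (bV iC) (bV (iL m)) = 0 := by
    intro m
    have h := hskew 0 0 (bV iC) (memb iC) (bV (iL m)) (memb (iL m))
    rw [mul_zero, s0, BLC] at h
    simpa using h
  have BCG : ∀ m : ℤ, br (bV iC) (bV (iG m)) = 0 := by
    intro m
    have h := hskew 0 1 (bV iC) (memb iC) (bV (iG m)) (memb (iG m))
    rw [zero_mul, s0, BGC] at h
    simpa using h
  -- L0 acts diagonally
  have brL0 : ∀ j, br (bV (iL 0)) (bV j) = wtI j • bV j := by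
    intro j
    rcases j with (m | u) | m
    · rw [show Sum.inl (Sum.inl m) = iL m from rfl, BLL]
      have h1 : ((0:ℤ)+m) = m := by omega
      have h2 : ((0:ℂ)^3 - 0)/12 = 0 := by norm_num
      rw [h1]
      simp [h2]
    · rw [show Sum.inl (Sum.inr u) = iC from rfl, BLC]
      simp
    · rw [show Sum.inr m = iG m from rfl, BLG]
      have h1 : ((0:ℤ)+m) = m := by omega
      rw [h1]
      simp
  have reprL0 : ∀ (i : (ℤ ⊕ Unit) ⊕ ℤ) (v : V),
      bV.repr (br (bV (iL 0)) v) i = wtI i * bV.repr v i := by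
    intro i
    have h : (bV.coord i).comp (br (bV (iL 0))) = wtI i • bV.coord i := by
      refine bV.ext fun j => ?_
      simp only [LinearMap.comp_apply, Module.Basis.coord_apply, LinearMap.smul_apply, smul_eq_mul,
        brL0 j, map_smul, Finsupp.smul_apply]
      rw [reprS]
      by_cases hji : j = i
      · subst hji; rfl
      · simp [hji]
    intro v
    have := LinearMap.congr_fun h v
    simpa [Module.Basis.coord_apply] using this
  -- coordinate lemmas for right bracket with basis vectors
  have W1 : ∀ (t m : ℤ) (v : V), bV.repr (br v (bV (iL m))) (iL t)
      = ((t:ℂ) - 2*m) * bV.repr v (iL (t - m)) := by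
    intro t m
    have h : (bV.coord (iL t)).comp (br.flip (bV (iL m)))
        = ((t:ℂ) - 2*m) • bV.coord (iL (t - m)) := by
      refine bV.ext fun j => ?_
      simp only [LinearMap.comp_apply, LinearMap.flip_apply, Module.Basis.coord_apply,
        LinearMap.smul_apply, smul_eq_mul]
      rcases j with (s | u) | s
      · rw [show Sum.inl (Sum.inl s) = iL s from rfl, BLL, map_add, map_smul, map_smul,
          Finsupp.add_apply, Finsupp.smul_apply, Finsupp.smul_apply, reprS, reprS, reprS]
        simp only [iC_ne_iL, if_false, smul_eq_mul, mul_zero, add_zero]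
        by_cases hs : s = t - m
        · subst hs
          rw [if_pos (by rw [iL_inj]; omega), if_pos rfl]
          push_cast
          ring
        · rw [if_neg (by rw [iL_inj]; omega), if_neg (by rw [iL_inj]; omega)]
          ring
      · rw [show Sum.inl (Sum.inr u) = iC from rfl, BCL]
        simp [reprS]
      · rw [show Sum.inr s = iG s from rfl, BGL, map_smul, Finsupp.smul_apply, reprS]
        simp [reprS]
    intro v
    have := LinearMap.congr_fun h v
    simpa [Module.Basis.coord_apply] using this
  have W2 : ∀ (t m : ℤ) (v : V), bV.repr (br v (bV (iL m))) (iG t)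
      = ((t:ℂ) - 3*m/2) * bV.repr v (iG (t - m)) := by
    intro t m
    have h : (bV.coord (iG t)).comp (br.flip (bV (iL m)))
        = ((t:ℂ) - 3*m/2) • bV.coord (iG (t - m)) := by
      refine bV.ext fun j => ?_
      simp only [LinearMap.comp_apply, LinearMap.flip_apply, Module.Basis.coord_apply,
        LinearMap.smul_apply, smul_eq_mul]
      rcases j with (s | u) | s
      · rw [show Sum.inl (Sum.inl s) = iL s from rfl, BLL, map_add, map_smul, map_smul,
          Finsupp.add_apply, Finsupp.smul_apply, Finsupp.smul_apply, reprS, reprS, reprS]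
        simp [reprS]
      · rw [show Sum.inl (Sum.inr u) = iC from rfl, BCL]
        simp [reprS]
      · rw [show Sum.inr s = iG s from rfl, BGL, map_smul, Finsupp.smul_apply, reprS]
        rw [reprS]
        by_cases hs : s = t - m
        · subst hs
          rw [if_pos (by rw [iG_inj]; omega), if_pos rfl]
          simp only [smul_eq_mul, mul_one]
          push_cast
          ring
        · rw [if_neg (by rw [iG_inj]; omega), if_neg (by rw [iG_inj]; omega)]
          simp
    intro v
    have := LinearMap.congr_fun h v
    simpa [Module.Basis.coord_apply] using this
  have W3 : ∀ (m : ℤ) (v : V), bV.repr (br v (bV (iL m))) iC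
      = (((m:ℂ) - m^3)/12) * bV.repr v (iL (-m)) := by
    intro m
    have h : (bV.coord iC).comp (br.flip (bV (iL m)))
        = (((m:ℂ) - m^3)/12) • bV.coord (iL (-m)) := by
      refine bV.ext fun j => ?_
      simp only [LinearMap.comp_apply, LinearMap.flip_apply, Module.Basis.coord_apply,
        LinearMap.smul_apply, smul_eq_mul]
      rcases j with (s | u) | s
      · rw [show Sum.inl (Sum.inl s) = iL s from rfl, BLL, map_add, map_smul, map_smul,
          Finsupp.add_apply, Finsupp.smul_apply, Finsupp.smul_apply, reprS, reprS, reprS]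
        simp only [iL_ne_iC, if_false, smul_eq_mul, mul_zero, zero_add]
        rw [if_pos trivial]
        by_cases hs : s = -m
        · subst hs
          rw [if_pos (by omega : (-m) + m = 0), if_pos rfl]
          push_cast
          ring
        · rw [if_neg (by omega : ¬ (s + m = 0)), if_neg (by simp [hs])]
          simp
      · rw [show Sum.inl (Sum.inr u) = iC from rfl, BCL]
        simp [reprS]
      · rw [show Sum.inr s = iG s from rfl, BGL, map_smul, Finsupp.smul_apply, reprS]
        simp [reprS]
    intro v
    have := LinearMap.congr_fun h v
    simpa [Module.Basis.coord_apply] using this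
  have W4 : ∀ (t m : ℤ) (v : V), bV.repr (br v (bV (iG m))) (iL t)
      = 2 * bV.repr v (iG (t - m)) := by
    intro t m
    have h : (bV.coord (iL t)).comp (br.flip (bV (iG m)))
        = (2:ℂ) • bV.coord (iG (t - m)) := by
      refine bV.ext fun j => ?_
      simp only [LinearMap.comp_apply, LinearMap.flip_apply, Module.Basis.coord_apply,
        LinearMap.smul_apply, smul_eq_mul]
      rcases j with (s | u) | s
      · rw [show Sum.inl (Sum.inl s) = iL s from rfl, BLG, map_smul, Finsupp.smul_apply, reprS]
        simp [reprS]
      · rw [show Sum.inl (Sum.inr u) = iC from rfl, BCG]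
        simp [reprS]
      · rw [show Sum.inr s = iG s from rfl, BGG, map_add, map_smul, map_smul,
          Finsupp.add_apply, Finsupp.smul_apply, Finsupp.smul_apply, reprS, reprS, reprS]
        simp only [iC_ne_iL, if_false, smul_eq_mul, mul_zero, add_zero]
        by_cases hs : s = t - m
        · subst hs
          rw [if_pos (by rw [iL_inj]; omega), if_pos rfl]
        · rw [if_neg (by rw [iL_inj]; omega), if_neg (by rw [iG_inj]; omega)]
    intro v
    have := LinearMap.congr_fun h v
    simpa [Module.Basis.coord_apply] using this
  have W5 : ∀ (t m : ℤ) (v : V), bV.repr (br v (bV (iG m))) (iG t)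
      = (((t:ℂ) - m)/2 - m) * bV.repr v (iL (t - m)) := by
    intro t m
    have h : (bV.coord (iG t)).comp (br.flip (bV (iG m)))
        = (((t:ℂ) - m)/2 - m) • bV.coord (iL (t - m)) := by
      refine bV.ext fun j => ?_
      simp only [LinearMap.comp_apply, LinearMap.flip_apply, Module.Basis.coord_apply,
        LinearMap.smul_apply, smul_eq_mul]
      rcases j with (s | u) | s
      · rw [show Sum.inl (Sum.inl s) = iL s from rfl, BLG, map_smul, Finsupp.smul_apply, reprS]
        rw [reprS]
        by_cases hs : s = t - m
        · subst hs
          rw [if_pos (by rw [iG_inj]; omega), if_pos rfl]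
          simp only [smul_eq_mul, mul_one]
          push_cast
          ring
        · rw [if_neg (by rw [iG_inj]; omega), if_neg (by rw [iL_inj]; omega)]
          simp
      · rw [show Sum.inl (Sum.inr u) = iC from rfl, BCG]
        simp [reprS]
      · rw [show Sum.inr s = iG s from rfl, BGG, map_add, map_smul, map_smul,
          Finsupp.add_apply, Finsupp.smul_apply, Finsupp.smul_apply, reprS, reprS, reprS]
        simp [reprS]
    intro v
    have := LinearMap.congr_fun h v
    simpa [Module.Basis.coord_apply] using this
  have W6 : ∀ (m : ℤ) (v : V), bV.repr (br v (bV (iG m))) iC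
      = (((m:ℂ)^2 - 1/4)/3) * bV.repr v (iG (-m)) := by
    intro m
    have h : (bV.coord iC).comp (br.flip (bV (iG m)))
        = (((m:ℂ)^2 - 1/4)/3) • bV.coord (iG (-m)) := by
      refine bV.ext fun j => ?_
      simp only [LinearMap.comp_apply, LinearMap.flip_apply, Module.Basis.coord_apply,
        LinearMap.smul_apply, smul_eq_mul]
      rcases j with (s | u) | s
      · rw [show Sum.inl (Sum.inl s) = iL s from rfl, BLG, map_smul, Finsupp.smul_apply, reprS]
        simp [reprS]
      · rw [show Sum.inl (Sum.inr u) = iC from rfl, BCG]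
        simp [reprS]
      · rw [show Sum.inr s = iG s from rfl, BGG, map_add, map_smul, map_smul,
          Finsupp.add_apply, Finsupp.smul_apply, Finsupp.smul_apply, reprS, reprS, reprS]
        simp only [iL_ne_iC, if_false, smul_eq_mul, mul_zero, zero_add]
        rw [if_pos trivial]
        by_cases hs : s = -m
        · subst hs
          rw [if_pos (by omega : (-m) + m = 0), if_pos rfl]
          push_cast
          ring
        · rw [if_neg (by omega : ¬ (s + m = 0)), if_neg (by simp [hs])]
          simp
    intro v
    have := LinearMap.congr_fun h v
    simpa [Module.Basis.coord_apply] using this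
  have W7 : ∀ (i : (ℤ ⊕ Unit) ⊕ ℤ) (v : V), bV.repr (br v (bV iC)) i = 0 := by
    intro i
    have h : (bV.coord i).comp (br.flip (bV iC)) = 0 := by
      refine bV.ext fun j => ?_
      rcases j with (s | u) | s
      · simp only [LinearMap.comp_apply, LinearMap.flip_apply, Module.Basis.coord_apply,
          LinearMap.zero_apply]
        rw [show Sum.inl (Sum.inl s) = iL s from rfl, BLC]
        simp
      · simp only [LinearMap.comp_apply, LinearMap.flip_apply, Module.Basis.coord_apply,
          LinearMap.zero_apply]
        rw [show Sum.inl (Sum.inr u) = iC from rfl, BCC]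
        simp
      · simp only [LinearMap.comp_apply, LinearMap.flip_apply, Module.Basis.coord_apply,
          LinearMap.zero_apply]
        rw [show Sum.inr s = iG s from rfl, BGC]
        simp
    intro v
    have := LinearMap.congr_fun h v
    simpa [Module.Basis.coord_apply] using this
  -- flipping a bracket whose left argument is L m
  have brLleft : ∀ (m : ℤ) (w : V), br (bV (iL m)) w = - br w (bV (iL m)) := by
    intro m
    have h : br (bV (iL m)) = -(br.flip (bV (iL m))) := by
      refine bV.ext fun k => ?_
      have hk := hskew (parI k) 0 (bV k) (memb k) (bV (iL m)) (memb (iL m))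
      rw [mul_zero, s0] at hk
      simp only [LinearMap.neg_apply, LinearMap.flip_apply]
      rw [hk]
      simp
    intro w
    rw [h]
    simp
  -- the master relation from hpost2 with y = L 0  (diamond)
  have dia : ∀ (j k i : (ℤ ⊕ Unit) ⊕ ℤ),
      (wtI k - wtI i) * bV.repr (circ (bV j) (bV k)) i
        = bV.repr (br (circ (bV (iL 0)) (bV j)) (bV k)) i := by
    intro j k i
    have h := hpost2 (parI j) 0 (parI k) (bV j) (memb j) (bV (iL 0)) (memb (iL 0)) (bV k) (memb k)
    rw [mul_zero, s0, one_smul, brL0 k, map_smul] at h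
    have hc := hcomm (parI j) 0 (bV j) (memb j) (bV (iL 0)) (memb (iL 0))
    rw [mul_zero, s0, one_smul] at hc
    rw [hc] at h
    have h2 := congrArg (fun v => bV.repr v i) h
    simp only [map_add, map_smul, Finsupp.add_apply, Finsupp.smul_apply, smul_eq_mul] at h2
    rw [reprL0] at h2
    linear_combination h2
  -- derivation property of D := circ (L 0)
  have R2 : ∀ k k', circ (bV (iL 0)) (br (bV k) (bV k'))
      = br (circ (bV (iL 0)) (bV k)) (bV k') + br (bV k) (circ (bV (iL 0)) (bV k')) := by
    intro k k'
    have h := hpost2 0 (parI k) (parI k') (bV (iL 0)) (memb (iL 0)) (bV k) (memb k) (bV k') (memb k')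
    rwa [zero_mul, s0, one_smul] at h
  have fact1 : ∀ (j k i : (ℤ ⊕ Unit) ⊕ ℤ), wtI i = wtI k →
      bV.repr (br (circ (bV (iL 0)) (bV j)) (bV k)) i = 0 := by
    intro j k i hik
    rw [← dia j k i, hik, sub_self, zero_mul]
  -- (#): weight-0 components of D e are multiples of C
  have hashL : ∀ j, bV.repr (circ (bV (iL 0)) (bV j)) (iL 0) = 0 := by
    intro j
    have h := fact1 j (iL 1) (iL 1) rfl
    rw [W1 1 1] at h
    have h1 : (((1:ℤ):ℂ) - 2*((1:ℤ):ℂ)) ≠ 0 := by norm_num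
    have := mul_eq_zero.mp h
    rcases this with h'|h'
    · exact absurd h' h1
    · simpa using h'
  have hashG : ∀ j, bV.repr (circ (bV (iL 0)) (bV j)) (iG 0) = 0 := by
    intro j
    have h := fact1 j (iL 1) (iG 1) rfl
    rw [W2 1 1] at h
    have h1 : (((1:ℤ):ℂ) - 3*((1:ℤ):ℂ)/2) ≠ 0 := by norm_num
    have := mul_eq_zero.mp h
    rcases this with h'|h'
    · exact absurd h' h1
    · simpa using h'
  -- u := circ (L 0) (L 0) has only a C component
  have uL : ∀ s : ℤ, bV.repr (circ (bV (iL 0)) (bV (iL 0))) (iL s) = 0 := by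
    intro s
    rcases eq_or_ne s 0 with rfl | hs
    · exact hashL (iL 0)
    · have h := dia (iL 0) (iL (-s)) (iL 0)
      rw [hashL (iL (-s)), mul_zero, W1 0 (-s)] at h
      have h2 : (((0:ℤ):ℂ) - 2*((-s:ℤ):ℂ)) ≠ 0 := by
        push_cast
        intro hc
        apply hs
        have : (s:ℂ) = 0 := by linear_combination hc/2
        exact_mod_cast this
      have := (mul_eq_zero.mp h.symm).resolve_left h2
      simpa using this
  have uG : ∀ s : ℤ, bV.repr (circ (bV (iL 0)) (bV (iL 0))) (iG s) = 0 := by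
    intro s
    rcases eq_or_ne s 0 with rfl | hs
    · exact hashG (iL 0)
    · have h := dia (iL 0) (iL (-s)) (iG 0)
      rw [hashG (iL (-s)), mul_zero, W2 0 (-s)] at h
      have h2 : (((0:ℤ):ℂ) - 3*((-s:ℤ):ℂ)/2) ≠ 0 := by
        push_cast
        intro hc
        apply hs
        have : (s:ℂ) = 0 := by linear_combination hc * 2/3
        exact_mod_cast this
      have := (mul_eq_zero.mp h.symm).resolve_left h2
      simpa using this
  -- brackets with u vanish in every coordinate
  have brU : ∀ (k i : (ℤ ⊕ Unit) ⊕ ℤ),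
      bV.repr (br (circ (bV (iL 0)) (bV (iL 0))) (bV k)) i = 0 := by
    intro k i
    rcases k with (m | u) | m
    · rcases i with (t | w) | t
      · rw [show Sum.inl (Sum.inl m) = iL m from rfl, show Sum.inl (Sum.inl t) = iL t from rfl,
          W1 t m, uL, mul_zero]
      · rw [show Sum.inl (Sum.inl m) = iL m from rfl, show Sum.inl (Sum.inr w) = iC from rfl,
          W3 m, uL, mul_zero]
      · rw [show Sum.inl (Sum.inl m) = iL m from rfl, show Sum.inr t = iG t from rfl,
          W2 t m, uG, mul_zero]
    · rw [show Sum.inl (Sum.inr u) = iC from rfl, W7]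
    · rcases i with (t | w) | t
      · rw [show Sum.inr m = iG m from rfl, show Sum.inl (Sum.inl t) = iL t from rfl,
          W4 t m, uG, mul_zero]
      · rw [show Sum.inr m = iG m from rfl, show Sum.inl (Sum.inr w) = iC from rfl,
          W6 m, uG, mul_zero]
      · rw [show Sum.inr m = iG m from rfl, show Sum.inr t = iG t from rfl,
          W5 t m, uL, mul_zero]
  -- D is weight-diagonal
  have offdiag : ∀ (k i : (ℤ ⊕ Unit) ⊕ ℤ), wtI i ≠ wtI k →
      bV.repr (circ (bV (iL 0)) (bV k)) i = 0 := by
    intro k i hik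
    have h := dia (iL 0) k i
    rw [brU k i] at h
    have h2 : wtI k - wtI i ≠ 0 := fun hc => hik (by linear_combination -hc)
    exact (mul_eq_zero.mp h).resolve_left h2
  -- R2 instance [L m, G 0]: A1 and A2
  have A1 : ∀ m : ℤ, (m:ℂ)/2 * bV.repr (circ (bV (iL 0)) (bV (iG m))) (iL m)
      = 2 * bV.repr (circ (bV (iL 0)) (bV (iL m))) (iG m) := by
    intro m
    have h := R2 (iL m) (iG 0)
    rw [BLG m 0, add_zero, map_smul, brLleft m] at h
    have h2 := congrArg (fun v => bV.repr v (iL m)) h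
    simp only [map_add, map_neg, map_smul, Finsupp.add_apply, Finsupp.neg_apply,
      Finsupp.smul_apply, smul_eq_mul] at h2
    rw [W4 m 0, sub_zero, W1 m m, sub_self, hashL (iG 0)] at h2
    push_cast at h2
    linear_combination h2
  have A2 : ∀ m : ℤ, (m:ℂ)/2 * bV.repr (circ (bV (iL 0)) (bV (iG m))) (iG m)
      = (m:ℂ)/2 * bV.repr (circ (bV (iL 0)) (bV (iL m))) (iL m) := by
    intro m
    have h := R2 (iL m) (iG 0)
    rw [BLG m 0, add_zero, map_smul, brLleft m] at h
    have h2 := congrArg (fun v => bV.repr v (iG m)) h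
    simp only [map_add, map_neg, map_smul, Finsupp.add_apply, Finsupp.neg_apply,
      Finsupp.smul_apply, smul_eq_mul] at h2
    rw [W5 m 0, sub_zero, W2 m m, sub_self, hashG (iG 0)] at h2
    push_cast at h2
    linear_combination h2
  -- R2 instance [L m, G (-m)] coordinate (iL 0): B1
  have B1 : ∀ m : ℤ, 2 * bV.repr (circ (bV (iL 0)) (bV (iL m))) (iG m)
      + 2*(m:ℂ) * bV.repr (circ (bV (iL 0)) (bV (iG (-m)))) (iL (-m)) = 0 := by
    intro m
    have h := R2 (iL m) (iG (-m))
    rw [BLG m (-m), show m + -m = 0 from by omega, map_smul, brLleft m] at h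
    have h2 := congrArg (fun v => bV.repr v (iL 0)) h
    simp only [map_add, map_neg, map_smul, Finsupp.add_apply, Finsupp.neg_apply,
      Finsupp.smul_apply, smul_eq_mul] at h2
    rw [W4 0 (-m), show (0:ℤ) - -m = m from by omega, W1 0 m, show (0:ℤ) - m = -m from by omega,
      hashL (iG 0)] at h2
    push_cast at h2
    linear_combination (-1 : ℂ) * h2
  -- beta and gamma vanish
  have βzero : ∀ m : ℤ, bV.repr (circ (bV (iL 0)) (bV (iL m))) (iG m) = 0 := by
    intro m
    have e1 := A1 m
    have e2 := A1 (-m)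
    have e3 := B1 m
    have e4 := B1 (-m)
    simp only [neg_neg] at e2 e4
    push_cast at e1 e2 e3 e4
    linear_combination (-8/15) * e1 + (-2/15) * e2 + (-1/30) * e3 + (-2/15) * e4
  have γzero : ∀ m : ℤ, m ≠ 0 → bV.repr (circ (bV (iL 0)) (bV (iG m))) (iL m) = 0 := by
    intro m hm
    have e1 := A1 m
    rw [βzero m, mul_zero] at e1
    have hm2 : (m:ℂ)/2 ≠ 0 := by
      simp only [ne_eq, div_eq_zero_iff]
      push_neg
      exact ⟨Int.cast_ne_zero.mpr hm, by norm_num⟩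
    exact (mul_eq_zero.mp e1).resolve_left hm2
  -- commutativity trick: E(n,m)
  have Ecomm : ∀ n m : ℤ, (m:ℂ) * ((n:ℂ) - m) * bV.repr (circ (bV (iL 0)) (bV (iL n))) (iL n)
      = (n:ℂ) * ((m:ℂ) - n) * bV.repr (circ (bV (iL 0)) (bV (iL m))) (iL m) := by
    intro n m
    have hP := dia (iL n) (iL m) (iL (n+m))
    have hQ := dia (iL m) (iL n) (iL (n+m))
    rw [W1 (n+m) m, show n + m - m = n from by omega] at hP
    rw [W1 (n+m) n, show n + m - n = m from by omega] at hQ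
    simp only [wtI_iL] at hP hQ
    have hC := hcomm (parI (iL n)) (parI (iL m)) (bV (iL n)) (memb (iL n)) (bV (iL m)) (memb (iL m))
    rw [parI_iL, parI_iL, mul_zero, s0, one_smul] at hC
    rw [hC] at hP
    push_cast at hP hQ
    linear_combination (-(m:ℂ)) * hP + (n:ℂ) * hQ
  have α1 : bV.repr (circ (bV (iL 0)) (bV (iL 1))) (iL 1) = 0 := by
    have e12 := Ecomm 1 2
    have e13 := Ecomm 1 3
    have e23 := Ecomm 2 3
    push_cast at e12 e13 e23
    linear_combination (-1/4) * e12 + (-1/12) * e13 + (1/12) * e23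
  have αzero : ∀ n : ℤ, n ≠ 0 → bV.repr (circ (bV (iL 0)) (bV (iL n))) (iL n) = 0 := by
    intro n hn
    rcases eq_or_ne n 1 with rfl | h1
    · exact α1
    · have e := Ecomm n 1
      rw [α1, mul_zero] at e
      push_cast at e
      have hne : ((n:ℂ) - 1) ≠ 0 := by
        intro hc
        apply h1
        have : (n:ℂ) = 1 := by linear_combination hc
        exact_mod_cast this
      have h2 : ((n:ℂ) - 1) * bV.repr (circ (bV (iL 0)) (bV (iL n))) (iL n) = 0 := by
        linear_combination e
      exact (mul_eq_zero.mp h2).resolve_left hne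
  have δzero : ∀ m : ℤ, m ≠ 0 → bV.repr (circ (bV (iL 0)) (bV (iG m))) (iG m) = 0 := by
    intro m hm
    have e := A2 m
    rw [αzero m hm, mul_zero] at e
    have hm2 : (m:ℂ)/2 ≠ 0 := by
      simp only [ne_eq, div_eq_zero_iff]
      push_neg
      exact ⟨Int.cast_ne_zero.mpr hm, by norm_num⟩
    exact (mul_eq_zero.mp e).resolve_left hm2
  -- the central coordinates
  have ucz : bV.repr (circ (bV (iL 0)) (bV (iL 0))) iC = 0 := by
    have h := R2 (iL 1) (iL (-1))
    rw [BLL 1 (-1), show (1:ℤ) + -1 = 0 from by omega, if_pos rfl, map_add, map_smul, map_smul,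
      brLleft 1] at h
    have h2 := congrArg (fun v => bV.repr v iC) h
    simp only [map_add, map_neg, map_smul, Finsupp.add_apply, Finsupp.neg_apply,
      Finsupp.smul_apply, smul_eq_mul] at h2
    rw [W3 (-1), W3 1] at h2
    push_cast at h2
    linear_combination h2 / 2
  have ccz : bV.repr (circ (bV (iL 0)) (bV iC)) iC = 0 := by
    have h := R2 (iL 2) (iL (-2))
    rw [BLL 2 (-2), show (2:ℤ) + -2 = 0 from by omega, if_pos rfl, map_add, map_smul, map_smul,
      brLleft 2] at h
    have h2 := congrArg (fun v => bV.repr v iC) h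
    simp only [map_add, map_neg, map_smul, Finsupp.add_apply, Finsupp.neg_apply,
      Finsupp.smul_apply, smul_eq_mul] at h2
    rw [W3 (-2), W3 2, show -(-2 : ℤ) = 2 from by omega, show -(2:ℤ) = -2 from by omega,
      αzero 2 (by norm_num), αzero (-2) (by norm_num), ucz] at h2
    push_cast at h2
    linear_combination h2 * 2
  have gcz : bV.repr (circ (bV (iL 0)) (bV (iG 0))) iC = 0 := by
    have h := R2 (iL 1) (iG (-1))
    rw [BLG 1 (-1), show (1:ℤ) + -1 = 0 from by omega, map_smul, brLleft 1] at h
    have h2 := congrArg (fun v => bV.repr v iC) h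
    simp only [map_add, map_neg, map_smul, Finsupp.add_apply, Finsupp.neg_apply,
      Finsupp.smul_apply, smul_eq_mul] at h2
    rw [W6 (-1), show -(-1:ℤ) = 1 from by omega, W3 1, βzero 1] at h2
    push_cast at h2
    linear_combination h2 * 2 / 3
  -- helper to transfer integer equalities from weight equalities
  have castne : ∀ a b : ℤ, a ≠ b → -(a:ℂ) ≠ -(b:ℂ) := by
    intro a b hab hc
    apply hab
    have : (a:ℂ) = (b:ℂ) := by linear_combination -hc
    exact_mod_cast this
  -- D vanishes on every basis vector
  have Dz : ∀ k, circ (bV (iL 0)) (bV k) = 0 := by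
    intro k
    refine bV.ext_elem fun i => ?_
    rw [map_zero, Finsupp.zero_apply]
    rcases k with (n | u) | n
    · rw [show Sum.inl (Sum.inl n) = iL n from rfl]
      rcases i with (t | w) | t
      · rw [show Sum.inl (Sum.inl t) = iL t from rfl]
        rcases eq_or_ne t n with rfl | ht
        · rcases eq_or_ne t 0 with rfl | ht0
          · exact uL 0
          · exact αzero t ht0
        · exact offdiag (iL n) (iL t) (by simpa using castne t n ht)
      · rw [show Sum.inl (Sum.inr w) = iC from rfl]
        rcases eq_or_ne n 0 with rfl | hn
        · exact ucz
        · refine offdiag (iL n) iC ?_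
          simp only [wtI_iC, wtI_iL]
          intro hc
          exact hn (by exact_mod_cast (neg_eq_zero.mp hc.symm))
      · rw [show Sum.inr t = iG t from rfl]
        rcases eq_or_ne t n with rfl | ht
        · exact βzero t
        · exact offdiag (iL n) (iG t) (by simpa using castne t n ht)
    · rw [show Sum.inl (Sum.inr u) = iC from rfl]
      rcases i with (t | w) | t
      · rw [show Sum.inl (Sum.inl t) = iL t from rfl]
        rcases eq_or_ne t 0 with rfl | ht
        · exact hashL iC
        · refine offdiag iC (iL t) ?_
          simp only [wtI_iC, wtI_iL]
          intro hc
          exact ht (by exact_mod_cast (neg_eq_zero.mp hc))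
      · rw [show Sum.inl (Sum.inr w) = iC from rfl]
        exact ccz
      · rw [show Sum.inr t = iG t from rfl]
        rcases eq_or_ne t 0 with rfl | ht
        · exact hashG iC
        · refine offdiag iC (iG t) ?_
          simp only [wtI_iC, wtI_iG]
          intro hc
          exact ht (by exact_mod_cast (neg_eq_zero.mp hc))
    · rw [show Sum.inr n = iG n from rfl]
      rcases i with (t | w) | t
      · rw [show Sum.inl (Sum.inl t) = iL t from rfl]
        rcases eq_or_ne t n with rfl | ht
        · rcases eq_or_ne t 0 with rfl | ht0
          · exact hashL (iG 0)
          · exact γzero t ht0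
        · exact offdiag (iG n) (iL t) (by simpa using castne t n ht)
      · rw [show Sum.inl (Sum.inr w) = iC from rfl]
        rcases eq_or_ne n 0 with rfl | hn
        · exact gcz
        · refine offdiag (iG n) iC ?_
          simp only [wtI_iC, wtI_iG]
          intro hc
          exact hn (by exact_mod_cast (neg_eq_zero.mp hc.symm))
      · rw [show Sum.inr t = iG t from rfl]
        rcases eq_or_ne t n with rfl | ht
        · rcases eq_or_ne t 0 with rfl | ht0
          · exact hashG (iG 0)
          · exact δzero t ht0
        · exact offdiag (iG n) (iG t) (by simpa using castne t n ht)
  have DzL : circ (bV (iL 0)) = 0 := by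
    refine bV.ext fun k => ?_
    rw [Dz k]
    rfl
  -- cascade: products with a nonzero-weight left factor vanish
  have cas : ∀ (j k : (ℤ ⊕ Unit) ⊕ ℤ), wtI j ≠ 0 → circ (bV j) (bV k) = 0 := by
    intro j k hj
    have h := hpost1 0 (parI j) (parI k) (bV (iL 0)) (memb (iL 0)) (bV j) (memb j) (bV k) (memb k)
    rw [zero_mul, s0, one_smul, brL0 j, map_smul, LinearMap.smul_apply, DzL] at h
    simp only [LinearMap.zero_apply, map_zero, sub_zero] at h
    exact (smul_eq_zero.mp h).resolve_left hj
  -- remaining weight-zero pairs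
  have hGG0 : circ (bV (iG 0)) (bV (iG 0)) = 0 := by
    have h := hpost1 0 1 1 (bV (iL 1)) (memb (iL 1)) (bV (iG (-1))) (memb (iG (-1)))
      (bV (iG 0)) (memb (iG 0))
    rw [zero_mul, s0, one_smul, BLG 1 (-1), show (1:ℤ) + -1 = 0 from by omega, map_smul,
      LinearMap.smul_apply, cas (iG (-1)) (iG 0) (by simp), cas (iL 1) (iG 0) (by simp),
      map_zero, map_zero, sub_zero] at h
    have hc : ((1:ℤ):ℂ)/2 - ((-1 : ℤ):ℂ) ≠ 0 := by push_cast; norm_num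
    exact (smul_eq_zero.mp h).resolve_left hc
  have hG0C : circ (bV (iG 0)) (bV iC) = 0 := by
    have h := hpost1 0 1 0 (bV (iL 1)) (memb (iL 1)) (bV (iG (-1))) (memb (iG (-1)))
      (bV iC) (memb iC)
    rw [zero_mul, s0, one_smul, BLG 1 (-1), show (1:ℤ) + -1 = 0 from by omega, map_smul,
      LinearMap.smul_apply, cas (iG (-1)) iC (by simp), cas (iL 1) iC (by simp),
      map_zero, map_zero, sub_zero] at h
    have hc : ((1:ℤ):ℂ)/2 - ((-1 : ℤ):ℂ) ≠ 0 := by push_cast; norm_num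
    exact (smul_eq_zero.mp h).resolve_left hc
  have hCC : circ (bV iC) (bV iC) = 0 := by
    have h := hpost1 0 0 0 (bV (iL 2)) (memb (iL 2)) (bV (iL (-2))) (memb (iL (-2)))
      (bV iC) (memb iC)
    rw [zero_mul, s0, one_smul, BLL 2 (-2), show (2:ℤ) + -2 = 0 from by omega, if_pos rfl,
      map_add, map_smul, map_smul, LinearMap.add_apply, LinearMap.smul_apply,
      LinearMap.smul_apply, Dz iC, cas (iL (-2)) iC (by simp), cas (iL 2) iC (by simp),
      map_zero, map_zero, sub_zero, smul_zero, zero_add] at h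
    have hc : ((2:ℤ):ℂ)^3/12 - ((2:ℤ):ℂ)/12 ≠ 0 := by push_cast; norm_num
    have hc2 : (((2:ℤ):ℂ)^3 - ((2:ℤ):ℂ))/12 ≠ 0 := by push_cast; norm_num
    exact (smul_eq_zero.mp h).resolve_left hc2
  -- all basis products vanish
  have cMM : ∀ (j k : (ℤ ⊕ Unit) ⊕ ℤ), circ (bV j) (bV k) = 0 := by
    have idwt : ∀ a, wtI a = 0 → a = iL 0 ∨ a = iC ∨ a = iG 0 := by
      intro a ha
      rcases a with (t | w) | t
      · left
        rw [show Sum.inl (Sum.inl t) = iL t from rfl] at ha ⊢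
        rw [wtI_iL] at ha
        have : t = 0 := by exact_mod_cast neg_eq_zero.mp ha
        rw [this]
      · right; left
        cases w; rfl
      · right; right
        rw [show Sum.inr t = iG t from rfl] at ha ⊢
        rw [wtI_iG] at ha
        have : t = 0 := by exact_mod_cast neg_eq_zero.mp ha
        rw [this]
    intro j k
    by_cases hj : wtI j = 0
    swap
    · exact cas j k hj
    by_cases hk : wtI k = 0
    swap
    · have h := hcomm (parI j) (parI k) (bV j) (memb j) (bV k) (memb k)
      rw [cas k j hk, smul_zero] at h
      exact h
    rcases idwt j hj with rfl | rfl | rfl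
    · exact Dz k
    · rcases idwt k hk with rfl | rfl | rfl
      · have h := hcomm (parI iC) (parI (iL 0)) (bV iC) (memb iC) (bV (iL 0)) (memb (iL 0))
        rw [Dz iC, smul_zero] at h
        exact h
      · exact hCC
      · have h := hcomm (parI iC) (parI (iG 0)) (bV iC) (memb iC) (bV (iG 0)) (memb (iG 0))
        rw [hG0C, smul_zero] at h
        exact h
    · rcases idwt k hk with rfl | rfl | rfl
      · have h := hcomm (parI (iG 0)) (parI (iL 0)) (bV (iG 0)) (memb (iG 0))
          (bV (iL 0)) (memb (iL 0))
        rw [Dz (iG 0), smul_zero] at h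
        exact h
      · exact hG0C
      · exact hGG0
  -- conclusion
  have hz : circ = 0 := by
    refine bV.ext fun j => ?_
    refine bV.ext fun k => ?_
    rw [cMM j k]
    rfl
  intro x y
  rw [hz]
  rfl
end

section
/- Every commutative post-Lie superalgebra structure ∘ on the super W(2,2) algebra SW is trivial, i.e. x ∘ y = 0 for all x, y ∈ SW. -/
noncomputable def swWt : (((ℤ ⊕ ℤ) ⊕ (Unit ⊕ Unit)) ⊕ (ℤ ⊕ ℤ)) → ℂ
  | Sum.inl (Sum.inl (Sum.inl m)) => -(m : ℂ)
  | Sum.inl (Sum.inl (Sum.inr m)) => -(m : ℂ)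
  | Sum.inl (Sum.inr _) => 0
  | Sum.inr (Sum.inl k) => -((k : ℂ) + 1/2)
  | Sum.inr (Sum.inr k) => -((k : ℂ) + 1/2)

lemma sw_int_ne_half (a b : ℤ) : (a : ℂ) ≠ (b : ℂ) + 1/2 := by
  intro h
  have h2 : ((2*a : ℤ) : ℂ) = ((2*b+1 : ℤ) : ℂ) := by push_cast; linear_combination 2*h
  have h3 := Int.cast_injective h2
  omega

lemma sw_int_cast_ne {a b : ℤ} (h : a ≠ b) : (a:ℂ) ≠ (b:ℂ) :=
  fun hc => h (Int.cast_injective hc)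

set_option maxHeartbeats 4000000 in
theorem postLie_SW_trivial
    (V : Type) [AddCommGroup V] [Module ℂ V]
    (bV : Module.Basis (((ℤ ⊕ ℤ) ⊕ (Unit ⊕ Unit)) ⊕ (ℤ ⊕ ℤ)) ℂ V)
    (br : V →ₗ[ℂ] V →ₗ[ℂ] V)
    (L : ℤ → V) (H : ℤ → V) (C1 : V) (C2 : V) (G : ℤ → V) (Q : ℤ → V)
    (hLdef : ∀ m : ℤ, L m = bV (Sum.inl (Sum.inl (Sum.inl m))))
    (hHdef : ∀ m : ℤ, H m = bV (Sum.inl (Sum.inl (Sum.inr m))))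
    (hC1def : C1 = bV (Sum.inl (Sum.inr (Sum.inl ()))))
    (hC2def : C2 = bV (Sum.inl (Sum.inr (Sum.inr ()))))
    (hGdef : ∀ k : ℤ, G k = bV (Sum.inr (Sum.inl k)))
    (hQdef : ∀ k : ℤ, Q k = bV (Sum.inr (Sum.inr k)))
    (Vsub : ZMod 2 → Submodule ℂ V)
    (hV0 : Vsub 0 = Submodule.span ℂ (Set.range (fun i : (ℤ ⊕ ℤ) ⊕ (Unit ⊕ Unit) => bV (Sum.inl i))))
    (hV1 : Vsub 1 = Submodule.span ℂ (Set.range (fun j : ℤ ⊕ ℤ => bV (Sum.inr j))))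
    (sgn : ZMod 2 → ℂ) (hsgn : ∀ p : ZMod 2, sgn p = if p = 1 then -1 else 1)
    (hLL : ∀ m n : ℤ, br (L m) (L n) = ((m : ℂ) - n) • L (m + n) +
      (if m + n = 0 then ((m : ℂ) ^ 3 - m) / 12 else 0) • C1)
    (hLH : ∀ m n : ℤ, br (L m) (H n) = ((m : ℂ) - n) • H (m + n) +
      (if m + n = 0 then ((m : ℂ) ^ 3 - m) / 12 else 0) • C2)
    (hLG : ∀ m k : ℤ, br (L m) (G k) = ((m : ℂ) / 2 - ((k : ℂ) + 1 / 2)) • G (m + k))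
    (hLQ : ∀ m k : ℤ, br (L m) (Q k) = ((m : ℂ) / 2 - ((k : ℂ) + 1 / 2)) • Q (m + k))
    (hGG : ∀ k l : ℤ, br (G k) (G l) = (2 : ℂ) • L (k + l + 1) +
      (if k + l + 1 = 0 then (((k : ℂ) + 1 / 2) ^ 2 - 1 / 4) / 3 else 0) • C1)
    (hGQ : ∀ k l : ℤ, br (G k) (Q l) = (2 : ℂ) • H (k + l + 1) +
      (if k + l + 1 = 0 then (((k : ℂ) + 1 / 2) ^ 2 - 1 / 4) / 3 else 0) • C2)
    (hHG : ∀ m k : ℤ, br (H m) (G k) = ((m : ℂ) / 2 - ((k : ℂ) + 1 / 2)) • Q (m + k))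
    (hHH : ∀ m n : ℤ, br (H m) (H n) = 0)
    (hHQ : ∀ m k : ℤ, br (H m) (Q k) = 0)
    (hQQ : ∀ k l : ℤ, br (Q k) (Q l) = 0)
    (hxC1 : ∀ x : V, br x C1 = 0)
    (hxC2 : ∀ x : V, br x C2 = 0)
    (hskew : ∀ p q : ZMod 2, ∀ x ∈ Vsub p, ∀ y ∈ Vsub q,
      br x y = (-(sgn (p * q))) • br y x)
    (circ : V →ₗ[ℂ] V →ₗ[ℂ] V)
    (hcomm : ∀ p q : ZMod 2, ∀ x ∈ Vsub p, ∀ y ∈ Vsub q, circ x y = sgn (p * q) • circ y x)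
    (hpost1 : ∀ p q t : ZMod 2, ∀ x ∈ Vsub p, ∀ y ∈ Vsub q, ∀ z ∈ Vsub t,
      circ (br x y) z = circ x (circ y z) - sgn (p * q) • circ y (circ x z))
    (hpost2 : ∀ p q t : ZMod 2, ∀ x ∈ Vsub p, ∀ y ∈ Vsub q, ∀ z ∈ Vsub t,
      circ x (br y z) = br (circ x y) z + sgn (p * q) • br y (circ x z)) :
    ∀ x y : V, circ x y = 0 := by
  -- basic sign facts
  have sgn0 : sgn 0 = 1 := by rw [hsgn]; exact if_neg (by decide)
  have sgn1 : sgn 1 = -1 := by rw [hsgn]; exact if_pos rfl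
  have sgnne : ∀ p : ZMod 2, sgn p ≠ 0 := by
    intro p; rw [hsgn]; split <;> norm_num
  -- memberships
  have memL : ∀ m : ℤ, L m ∈ Vsub 0 := fun m => by
    rw [hV0, hLdef]; exact Submodule.subset_span ⟨Sum.inl (Sum.inl m), rfl⟩
  have memH : ∀ m : ℤ, H m ∈ Vsub 0 := fun m => by
    rw [hV0, hHdef]; exact Submodule.subset_span ⟨Sum.inl (Sum.inr m), rfl⟩
  have memC1 : C1 ∈ Vsub 0 := by
    rw [hV0, hC1def]; exact Submodule.subset_span ⟨Sum.inr (Sum.inl ()), rfl⟩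
  have memC2 : C2 ∈ Vsub 0 := by
    rw [hV0, hC2def]; exact Submodule.subset_span ⟨Sum.inr (Sum.inr ()), rfl⟩
  have memG : ∀ k : ℤ, G k ∈ Vsub 1 := fun k => by
    rw [hV1, hGdef]; exact Submodule.subset_span ⟨Sum.inl k, rfl⟩
  have memQ : ∀ k : ℤ, Q k ∈ Vsub 1 := fun k => by
    rw [hV1, hQdef]; exact Submodule.subset_span ⟨Sum.inr k, rfl⟩
  have hPb : ∀ i : (((ℤ ⊕ ℤ) ⊕ (Unit ⊕ Unit)) ⊕ (ℤ ⊕ ℤ)), ∃ p, bV i ∈ Vsub p := by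
    rintro (((m | m) | (⟨⟩ | ⟨⟩)) | (k | k))
    · exact ⟨0, by rw [← hLdef]; exact memL m⟩
    · exact ⟨0, by rw [← hHdef]; exact memH m⟩
    · exact ⟨0, by rw [← hC1def]; exact memC1⟩
    · exact ⟨0, by rw [← hC2def]; exact memC2⟩
    · exact ⟨1, by rw [← hGdef]; exact memG k⟩
    · exact ⟨1, by rw [← hQdef]; exact memQ k⟩
  -- flipped brackets
  have brHL : ∀ m n : ℤ, br (H m) (L n) = -br (L n) (H m) := fun m n => by
    have := hskew 0 0 (H m) (memH m) (L n) (memL n)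
    simpa [sgn0] using this
  have brGL : ∀ k n : ℤ, br (G k) (L n) = -br (L n) (G k) := fun k n => by
    have := hskew 1 0 (G k) (memG k) (L n) (memL n)
    simpa [sgn0] using this
  have brQL : ∀ k n : ℤ, br (Q k) (L n) = -br (L n) (Q k) := fun k n => by
    have := hskew 1 0 (Q k) (memQ k) (L n) (memL n)
    simpa [sgn0] using this
  have brGH : ∀ k m : ℤ, br (G k) (H m) = -br (H m) (G k) := fun k m => by
    have := hskew 1 0 (G k) (memG k) (H m) (memH m)
    simpa [sgn0] using this
  have brQH : ∀ k m : ℤ, br (Q k) (H m) = 0 := fun k m => by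
    have := hskew 1 0 (Q k) (memQ k) (H m) (memH m)
    simpa [sgn0, hHQ] using this
  have brQG : ∀ k l : ℤ, br (Q k) (G l) = br (G l) (Q k) := fun k l => by
    have := hskew 1 1 (Q k) (memQ k) (G l) (memG l)
    simpa [sgn1] using this
  have brC1v : ∀ v : V, br C1 v = 0 := by
    have h : br C1 = (0 : V →ₗ[ℂ] V) := by
      refine bV.ext fun i => ?_
      obtain ⟨p, hp⟩ := hPb i
      have := hskew 0 p C1 memC1 (bV i) hp
      simpa [sgn0, hxC1] using this
    intro v; rw [h]; rfl
  have brC2v : ∀ v : V, br C2 v = 0 := by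
    have h : br C2 = (0 : V →ₗ[ℂ] V) := by
      refine bV.ext fun i => ?_
      obtain ⟨p, hp⟩ := hPb i
      have := hskew 0 p C2 memC2 (bV i) hp
      simpa [sgn0, hxC2] using this
    intro v; rw [h]; rfl
  -- L0 brackets normalized
  have hbrL0L : ∀ m : ℤ, br (L 0) (L m) = (-(m:ℂ)) • L m := fun m => by
    rw [hLL 0 m]
    have h0 : (((0:ℤ):ℂ) ^ 3 - ((0:ℤ):ℂ)) / 12 = 0 := by norm_num
    rw [h0, ite_self, zero_smul, add_zero, zero_add]
    norm_num
  have hbrL0H : ∀ m : ℤ, br (L 0) (H m) = (-(m:ℂ)) • H m := fun m => by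
    rw [hLH 0 m]
    have h0 : (((0:ℤ):ℂ) ^ 3 - ((0:ℤ):ℂ)) / 12 = 0 := by norm_num
    rw [h0, ite_self, zero_smul, add_zero, zero_add]
    norm_num
  have hbrL0G : ∀ k : ℤ, br (L 0) (G k) = (-((k:ℂ)+1/2)) • G k := fun k => by
    rw [hLG 0 k, zero_add]
    norm_num
  have hbrL0Q : ∀ k : ℤ, br (L 0) (Q k) = (-((k:ℂ)+1/2)) • Q k := fun k => by
    rw [hLQ 0 k, zero_add]
    norm_num
  -- diagonal action of L0 on the basis
  have brL0b : ∀ i, br (L 0) (bV i) = swWt i • bV i := by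
    rintro (((m | m) | (⟨⟩ | ⟨⟩)) | (k | k))
    · rw [← hLdef m, hbrL0L m, hLdef m]; simp [swWt]
    · rw [← hHdef m, hbrL0H m, hHdef m]; simp [swWt]
    · rw [← hC1def, hxC1, hC1def]; simp [swWt]
    · rw [← hC2def, hxC2, hC2def]; simp [swWt]
    · rw [← hGdef k, hbrL0G k, hGdef k]; simp [swWt]
    · rw [← hQdef k, hbrL0Q k, hQdef k]; simp [swWt]
  have diag : ∀ (w : V) (j), bV.repr (br (L 0) w) j = swWt j * bV.repr w j := by
    have hfun : ∀ j, (bV.coord j).comp (br (L 0)) = swWt j • bV.coord j := by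
      intro j
      refine bV.ext fun i => ?_
      simp only [LinearMap.coe_comp, Function.comp_apply, LinearMap.smul_apply,
        Module.Basis.coord_apply, brL0b i, map_smul, Finsupp.smul_apply, Module.Basis.repr_self,
        Finsupp.single_apply, smul_eq_mul]
      by_cases h : i = j
      · subst h; rfl
      · simp [h]
    intro w j
    simpa using LinearMap.congr_fun (hfun j) w
  have eig : ∀ (w : V) (c : ℂ), br (L 0) w = c • w →
      ∀ j, swWt j ≠ c → bV.repr w j = 0 := by
    intro w c hw j hj
    have hd := diag w j
    rw [hw, map_smul, Finsupp.smul_apply, smul_eq_mul] at hd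
    have h2 : (swWt j - c) * bV.repr w j = 0 := by linear_combination -hd
    rcases mul_eq_zero.mp h2 with h | h
    · exact absurd (sub_eq_zero.mp h) hj
    · exact h
  -- helper for central terms
  have reprCentral : ∀ (P : Prop) [Decidable P] (c : ℂ) (w : V) (j),
      bV.repr (if P then c • w else 0) j = if P then c * bV.repr w j else 0 := by
    intros P inst c w j
    split_ifs <;> simp
  -- coefficient functionals
  have F5 : ∀ (l m : ℤ) (u : V), bV.repr (br u (G l)) (Sum.inl (Sum.inl (Sum.inl m))) =
      2 * bV.repr u (Sum.inr (Sum.inl (m - l - 1))) := by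
    intro l m
    have hfun : (bV.coord (Sum.inl (Sum.inl (Sum.inl m)))).comp (LinearMap.flip br (G l)) =
        (2:ℂ) • bV.coord (Sum.inr (Sum.inl (m - l - 1))) := by
      refine bV.ext fun i => ?_
      simp only [LinearMap.coe_comp, Function.comp_apply, LinearMap.flip_apply,
        LinearMap.smul_apply, Module.Basis.coord_apply, smul_eq_mul]
      rcases i with (((s | s) | (⟨⟩ | ⟨⟩)) | (s | s))
      · rw [← hLdef s, hLG s l]
        simp [hLdef, hHdef, hGdef, hQdef, hC1def, hC2def, Module.Basis.repr_self, Finsupp.single_apply, map_add, map_smul, map_neg, Finsupp.add_apply, Finsupp.smul_apply, Finsupp.neg_apply, smul_eq_mul, mul_zero, zero_mul, mul_one, reprCentral, ite_self]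
      · rw [← hHdef s, hHG s l]
        simp [hLdef, hHdef, hGdef, hQdef, hC1def, hC2def, Module.Basis.repr_self, Finsupp.single_apply, map_add, map_smul, map_neg, Finsupp.add_apply, Finsupp.smul_apply, Finsupp.neg_apply, smul_eq_mul, mul_zero, zero_mul, mul_one, reprCentral, ite_self]
      · rw [← hC1def, brC1v]
        simp [hLdef, hHdef, hGdef, hQdef, hC1def, hC2def, Module.Basis.repr_self, Finsupp.single_apply, map_add, map_smul, map_neg, Finsupp.add_apply, Finsupp.smul_apply, Finsupp.neg_apply, smul_eq_mul, mul_zero, zero_mul, mul_one, reprCentral, ite_self]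
      · rw [← hC2def, brC2v]
        simp [hLdef, hHdef, hGdef, hQdef, hC1def, hC2def, Module.Basis.repr_self, Finsupp.single_apply, map_add, map_smul, map_neg, Finsupp.add_apply, Finsupp.smul_apply, Finsupp.neg_apply, smul_eq_mul, mul_zero, zero_mul, mul_one, reprCentral, ite_self]
      · rw [← hGdef s, hGG s l]
        by_cases h : s = m - l - 1
        · subst h
          simp [hLdef, hHdef, hGdef, hQdef, hC1def, hC2def, Module.Basis.repr_self, Finsupp.single_apply, map_add, map_smul, map_neg, Finsupp.add_apply, Finsupp.smul_apply, Finsupp.neg_apply, smul_eq_mul, mul_zero, zero_mul, mul_one, reprCentral, ite_self, show m - l - 1 + l + 1 = m from by omega]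
          try push_cast
          try ring
        · simp [hLdef, hHdef, hGdef, hQdef, hC1def, hC2def, Module.Basis.repr_self, Finsupp.single_apply, map_add, map_smul, map_neg, Finsupp.add_apply, Finsupp.smul_apply, Finsupp.neg_apply, smul_eq_mul, mul_zero, zero_mul, mul_one, reprCentral, ite_self, h, show ¬(s + l + 1 = m) from by omega]
      · rw [← hQdef s, brQG s l, hGQ l s]
        simp [hLdef, hHdef, hGdef, hQdef, hC1def, hC2def, Module.Basis.repr_self, Finsupp.single_apply, map_add, map_smul, map_neg, Finsupp.add_apply, Finsupp.smul_apply, Finsupp.neg_apply, smul_eq_mul, mul_zero, zero_mul, mul_one, reprCentral, ite_self]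
    intro u
    simpa using LinearMap.congr_fun hfun u
  have F6 : ∀ (l m : ℤ) (u : V), bV.repr (br u (G l)) (Sum.inl (Sum.inl (Sum.inr m))) =
      2 * bV.repr u (Sum.inr (Sum.inr (m - l - 1))) := by
    intro l m
    have hfun : (bV.coord (Sum.inl (Sum.inl (Sum.inr m)))).comp (LinearMap.flip br (G l)) =
        (2:ℂ) • bV.coord (Sum.inr (Sum.inr (m - l - 1))) := by
      refine bV.ext fun i => ?_
      simp only [LinearMap.coe_comp, Function.comp_apply, LinearMap.flip_apply,
        LinearMap.smul_apply, Module.Basis.coord_apply, smul_eq_mul]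
      rcases i with (((s | s) | (⟨⟩ | ⟨⟩)) | (s | s))
      · rw [← hLdef s, hLG s l]
        simp [hLdef, hHdef, hGdef, hQdef, hC1def, hC2def, Module.Basis.repr_self, Finsupp.single_apply, map_add, map_smul, map_neg, Finsupp.add_apply, Finsupp.smul_apply, Finsupp.neg_apply, smul_eq_mul, mul_zero, zero_mul, mul_one, reprCentral, ite_self]
      · rw [← hHdef s, hHG s l]
        simp [hLdef, hHdef, hGdef, hQdef, hC1def, hC2def, Module.Basis.repr_self, Finsupp.single_apply, map_add, map_smul, map_neg, Finsupp.add_apply, Finsupp.smul_apply, Finsupp.neg_apply, smul_eq_mul, mul_zero, zero_mul, mul_one, reprCentral, ite_self]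
      · rw [← hC1def, brC1v]
        simp [hLdef, hHdef, hGdef, hQdef, hC1def, hC2def, Module.Basis.repr_self, Finsupp.single_apply, map_add, map_smul, map_neg, Finsupp.add_apply, Finsupp.smul_apply, Finsupp.neg_apply, smul_eq_mul, mul_zero, zero_mul, mul_one, reprCentral, ite_self]
      · rw [← hC2def, brC2v]
        simp [hLdef, hHdef, hGdef, hQdef, hC1def, hC2def, Module.Basis.repr_self, Finsupp.single_apply, map_add, map_smul, map_neg, Finsupp.add_apply, Finsupp.smul_apply, Finsupp.neg_apply, smul_eq_mul, mul_zero, zero_mul, mul_one, reprCentral, ite_self]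
      · rw [← hGdef s, hGG s l]
        simp [hLdef, hHdef, hGdef, hQdef, hC1def, hC2def, Module.Basis.repr_self, Finsupp.single_apply, map_add, map_smul, map_neg, Finsupp.add_apply, Finsupp.smul_apply, Finsupp.neg_apply, smul_eq_mul, mul_zero, zero_mul, mul_one, reprCentral, ite_self]
      · rw [← hQdef s, brQG s l, hGQ l s]
        by_cases h : s = m - l - 1
        · subst h
          simp [hLdef, hHdef, hGdef, hQdef, hC1def, hC2def, Module.Basis.repr_self, Finsupp.single_apply, map_add, map_smul, map_neg, Finsupp.add_apply, Finsupp.smul_apply, Finsupp.neg_apply, smul_eq_mul, mul_zero, zero_mul, mul_one, reprCentral, ite_self, show l + (m - l - 1) + 1 = m from by omega]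
          try push_cast
          try ring
        · simp [hLdef, hHdef, hGdef, hQdef, hC1def, hC2def, Module.Basis.repr_self, Finsupp.single_apply, map_add, map_smul, map_neg, Finsupp.add_apply, Finsupp.smul_apply, Finsupp.neg_apply, smul_eq_mul, mul_zero, zero_mul, mul_one, reprCentral, ite_self, h, show ¬(l + s + 1 = m) from by omega]
    intro u
    simpa using LinearMap.congr_fun hfun u
  have F1s : ∀ u : V, bV.repr (br u (G (-1))) (Sum.inr (Sum.inl (-1))) =
      (1/2) * bV.repr u (Sum.inl (Sum.inl (Sum.inl 0))) := by
    have hfun : (bV.coord (Sum.inr (Sum.inl (-1)))).comp (LinearMap.flip br (G (-1))) =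
        ((1:ℂ)/2) • bV.coord (Sum.inl (Sum.inl (Sum.inl 0))) := by
      refine bV.ext fun i => ?_
      simp only [LinearMap.coe_comp, Function.comp_apply, LinearMap.flip_apply,
        LinearMap.smul_apply, Module.Basis.coord_apply, smul_eq_mul]
      rcases i with (((s | s) | (⟨⟩ | ⟨⟩)) | (s | s))
      · rw [← hLdef s, hLG s (-1)]
        by_cases h : s = 0
        · subst h
          simp [hLdef, hHdef, hGdef, hQdef, hC1def, hC2def, Module.Basis.repr_self, Finsupp.single_apply, map_add, map_smul, map_neg, Finsupp.add_apply, Finsupp.smul_apply, Finsupp.neg_apply, smul_eq_mul, mul_zero, zero_mul, mul_one, reprCentral, ite_self, show (0:ℤ) + -1 = -1 from by omega]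
          try push_cast
          try ring
        · simp [hLdef, hHdef, hGdef, hQdef, hC1def, hC2def, Module.Basis.repr_self, Finsupp.single_apply, map_add, map_smul, map_neg, Finsupp.add_apply, Finsupp.smul_apply, Finsupp.neg_apply, smul_eq_mul, mul_zero, zero_mul, mul_one, reprCentral, ite_self, h, show ¬(s + -1 = -1) from by omega]
      · rw [← hHdef s, hHG s (-1)]
        simp [hLdef, hHdef, hGdef, hQdef, hC1def, hC2def, Module.Basis.repr_self, Finsupp.single_apply, map_add, map_smul, map_neg, Finsupp.add_apply, Finsupp.smul_apply, Finsupp.neg_apply, smul_eq_mul, mul_zero, zero_mul, mul_one, reprCentral, ite_self]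
      · rw [← hC1def, brC1v]
        simp [hLdef, hHdef, hGdef, hQdef, hC1def, hC2def, Module.Basis.repr_self, Finsupp.single_apply, map_add, map_smul, map_neg, Finsupp.add_apply, Finsupp.smul_apply, Finsupp.neg_apply, smul_eq_mul, mul_zero, zero_mul, mul_one, reprCentral, ite_self]
      · rw [← hC2def, brC2v]
        simp [hLdef, hHdef, hGdef, hQdef, hC1def, hC2def, Module.Basis.repr_self, Finsupp.single_apply, map_add, map_smul, map_neg, Finsupp.add_apply, Finsupp.smul_apply, Finsupp.neg_apply, smul_eq_mul, mul_zero, zero_mul, mul_one, reprCentral, ite_self]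
      · rw [← hGdef s, hGG s (-1)]
        simp [hLdef, hHdef, hGdef, hQdef, hC1def, hC2def, Module.Basis.repr_self, Finsupp.single_apply, map_add, map_smul, map_neg, Finsupp.add_apply, Finsupp.smul_apply, Finsupp.neg_apply, smul_eq_mul, mul_zero, zero_mul, mul_one, reprCentral, ite_self]
      · rw [← hQdef s, brQG s (-1), hGQ (-1) s]
        simp [hLdef, hHdef, hGdef, hQdef, hC1def, hC2def, Module.Basis.repr_self, Finsupp.single_apply, map_add, map_smul, map_neg, Finsupp.add_apply, Finsupp.smul_apply, Finsupp.neg_apply, smul_eq_mul, mul_zero, zero_mul, mul_one, reprCentral, ite_self]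
    intro u
    simpa using LinearMap.congr_fun hfun u
  have F2s : ∀ u : V, bV.repr (br u (G (-1))) (Sum.inr (Sum.inr (-1))) =
      (1/2) * bV.repr u (Sum.inl (Sum.inl (Sum.inr 0))) := by
    have hfun : (bV.coord (Sum.inr (Sum.inr (-1)))).comp (LinearMap.flip br (G (-1))) =
        ((1:ℂ)/2) • bV.coord (Sum.inl (Sum.inl (Sum.inr 0))) := by
      refine bV.ext fun i => ?_
      simp only [LinearMap.coe_comp, Function.comp_apply, LinearMap.flip_apply,
        LinearMap.smul_apply, Module.Basis.coord_apply, smul_eq_mul]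
      rcases i with (((s | s) | (⟨⟩ | ⟨⟩)) | (s | s))
      · rw [← hLdef s, hLG s (-1)]
        simp [hLdef, hHdef, hGdef, hQdef, hC1def, hC2def, Module.Basis.repr_self, Finsupp.single_apply, map_add, map_smul, map_neg, Finsupp.add_apply, Finsupp.smul_apply, Finsupp.neg_apply, smul_eq_mul, mul_zero, zero_mul, mul_one, reprCentral, ite_self]
      · rw [← hHdef s, hHG s (-1)]
        by_cases h : s = 0
        · subst h
          simp [hLdef, hHdef, hGdef, hQdef, hC1def, hC2def, Module.Basis.repr_self, Finsupp.single_apply, map_add, map_smul, map_neg, Finsupp.add_apply, Finsupp.smul_apply, Finsupp.neg_apply, smul_eq_mul, mul_zero, zero_mul, mul_one, reprCentral, ite_self, show (0:ℤ) + -1 = -1 from by omega]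
          try push_cast
          try ring
        · simp [hLdef, hHdef, hGdef, hQdef, hC1def, hC2def, Module.Basis.repr_self, Finsupp.single_apply, map_add, map_smul, map_neg, Finsupp.add_apply, Finsupp.smul_apply, Finsupp.neg_apply, smul_eq_mul, mul_zero, zero_mul, mul_one, reprCentral, ite_self, h, show ¬(s + -1 = -1) from by omega]
      · rw [← hC1def, brC1v]
        simp [hLdef, hHdef, hGdef, hQdef, hC1def, hC2def, Module.Basis.repr_self, Finsupp.single_apply, map_add, map_smul, map_neg, Finsupp.add_apply, Finsupp.smul_apply, Finsupp.neg_apply, smul_eq_mul, mul_zero, zero_mul, mul_one, reprCentral, ite_self]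
      · rw [← hC2def, brC2v]
        simp [hLdef, hHdef, hGdef, hQdef, hC1def, hC2def, Module.Basis.repr_self, Finsupp.single_apply, map_add, map_smul, map_neg, Finsupp.add_apply, Finsupp.smul_apply, Finsupp.neg_apply, smul_eq_mul, mul_zero, zero_mul, mul_one, reprCentral, ite_self]
      · rw [← hGdef s, hGG s (-1)]
        simp [hLdef, hHdef, hGdef, hQdef, hC1def, hC2def, Module.Basis.repr_self, Finsupp.single_apply, map_add, map_smul, map_neg, Finsupp.add_apply, Finsupp.smul_apply, Finsupp.neg_apply, smul_eq_mul, mul_zero, zero_mul, mul_one, reprCentral, ite_self]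
      · rw [← hQdef s, brQG s (-1), hGQ (-1) s]
        simp [hLdef, hHdef, hGdef, hQdef, hC1def, hC2def, Module.Basis.repr_self, Finsupp.single_apply, map_add, map_smul, map_neg, Finsupp.add_apply, Finsupp.smul_apply, Finsupp.neg_apply, smul_eq_mul, mul_zero, zero_mul, mul_one, reprCentral, ite_self]
    intro u
    simpa using LinearMap.congr_fun hfun u
  have F1p : ∀ u : V, bV.repr (br (G (-1)) u) (Sum.inr (Sum.inl (-1))) =
      -(1/2) * bV.repr u (Sum.inl (Sum.inl (Sum.inl 0))) := by
    have hfun : (bV.coord (Sum.inr (Sum.inl (-1)))).comp (br (G (-1))) =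
        (-(1/2) : ℂ) • bV.coord (Sum.inl (Sum.inl (Sum.inl 0))) := by
      refine bV.ext fun i => ?_
      simp only [LinearMap.coe_comp, Function.comp_apply,
        LinearMap.smul_apply, Module.Basis.coord_apply, smul_eq_mul]
      rcases i with (((s | s) | (⟨⟩ | ⟨⟩)) | (s | s))
      · rw [← hLdef s, brGL (-1) s, hLG s (-1)]
        by_cases h : s = 0
        · subst h
          simp [hLdef, hHdef, hGdef, hQdef, hC1def, hC2def, Module.Basis.repr_self, Finsupp.single_apply, map_add, map_smul, map_neg, Finsupp.add_apply, Finsupp.smul_apply, Finsupp.neg_apply, smul_eq_mul, mul_zero, zero_mul, mul_one, reprCentral, ite_self, show (0:ℤ) + -1 = -1 from by omega]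
          try push_cast
          try ring
        · simp [hLdef, hHdef, hGdef, hQdef, hC1def, hC2def, Module.Basis.repr_self, Finsupp.single_apply, map_add, map_smul, map_neg, Finsupp.add_apply, Finsupp.smul_apply, Finsupp.neg_apply, smul_eq_mul, mul_zero, zero_mul, mul_one, reprCentral, ite_self, h, show ¬(s + -1 = -1) from by omega]
      · rw [← hHdef s, brGH (-1) s, hHG s (-1)]
        simp [hLdef, hHdef, hGdef, hQdef, hC1def, hC2def, Module.Basis.repr_self, Finsupp.single_apply, map_add, map_smul, map_neg, Finsupp.add_apply, Finsupp.smul_apply, Finsupp.neg_apply, smul_eq_mul, mul_zero, zero_mul, mul_one, reprCentral, ite_self]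
      · rw [← hC1def, hxC1]
        simp [hLdef, hHdef, hGdef, hQdef, hC1def, hC2def, Module.Basis.repr_self, Finsupp.single_apply, map_add, map_smul, map_neg, Finsupp.add_apply, Finsupp.smul_apply, Finsupp.neg_apply, smul_eq_mul, mul_zero, zero_mul, mul_one, reprCentral, ite_self]
      · rw [← hC2def, hxC2]
        simp [hLdef, hHdef, hGdef, hQdef, hC1def, hC2def, Module.Basis.repr_self, Finsupp.single_apply, map_add, map_smul, map_neg, Finsupp.add_apply, Finsupp.smul_apply, Finsupp.neg_apply, smul_eq_mul, mul_zero, zero_mul, mul_one, reprCentral, ite_self]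
      · rw [← hGdef s, hGG (-1) s]
        simp [hLdef, hHdef, hGdef, hQdef, hC1def, hC2def, Module.Basis.repr_self, Finsupp.single_apply, map_add, map_smul, map_neg, Finsupp.add_apply, Finsupp.smul_apply, Finsupp.neg_apply, smul_eq_mul, mul_zero, zero_mul, mul_one, reprCentral, ite_self]
      · rw [← hQdef s, hGQ (-1) s]
        simp [hLdef, hHdef, hGdef, hQdef, hC1def, hC2def, Module.Basis.repr_self, Finsupp.single_apply, map_add, map_smul, map_neg, Finsupp.add_apply, Finsupp.smul_apply, Finsupp.neg_apply, smul_eq_mul, mul_zero, zero_mul, mul_one, reprCentral, ite_self]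
    intro u
    simpa using LinearMap.congr_fun hfun u
  have F2p : ∀ u : V, bV.repr (br (G (-1)) u) (Sum.inr (Sum.inr (-1))) =
      -(1/2) * bV.repr u (Sum.inl (Sum.inl (Sum.inr 0))) := by
    have hfun : (bV.coord (Sum.inr (Sum.inr (-1)))).comp (br (G (-1))) =
        (-(1/2) : ℂ) • bV.coord (Sum.inl (Sum.inl (Sum.inr 0))) := by
      refine bV.ext fun i => ?_
      simp only [LinearMap.coe_comp, Function.comp_apply,
        LinearMap.smul_apply, Module.Basis.coord_apply, smul_eq_mul]
      rcases i with (((s | s) | (⟨⟩ | ⟨⟩)) | (s | s))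
      · rw [← hLdef s, brGL (-1) s, hLG s (-1)]
        simp [hLdef, hHdef, hGdef, hQdef, hC1def, hC2def, Module.Basis.repr_self, Finsupp.single_apply, map_add, map_smul, map_neg, Finsupp.add_apply, Finsupp.smul_apply, Finsupp.neg_apply, smul_eq_mul, mul_zero, zero_mul, mul_one, reprCentral, ite_self]
      · rw [← hHdef s, brGH (-1) s, hHG s (-1)]
        by_cases h : s = 0
        · subst h
          simp [hLdef, hHdef, hGdef, hQdef, hC1def, hC2def, Module.Basis.repr_self, Finsupp.single_apply, map_add, map_smul, map_neg, Finsupp.add_apply, Finsupp.smul_apply, Finsupp.neg_apply, smul_eq_mul, mul_zero, zero_mul, mul_one, reprCentral, ite_self, show (0:ℤ) + -1 = -1 from by omega]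
          try push_cast
          try ring
        · simp [hLdef, hHdef, hGdef, hQdef, hC1def, hC2def, Module.Basis.repr_self, Finsupp.single_apply, map_add, map_smul, map_neg, Finsupp.add_apply, Finsupp.smul_apply, Finsupp.neg_apply, smul_eq_mul, mul_zero, zero_mul, mul_one, reprCentral, ite_self, h, show ¬(s + -1 = -1) from by omega]
      · rw [← hC1def, hxC1]
        simp [hLdef, hHdef, hGdef, hQdef, hC1def, hC2def, Module.Basis.repr_self, Finsupp.single_apply, map_add, map_smul, map_neg, Finsupp.add_apply, Finsupp.smul_apply, Finsupp.neg_apply, smul_eq_mul, mul_zero, zero_mul, mul_one, reprCentral, ite_self]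
      · rw [← hC2def, hxC2]
        simp [hLdef, hHdef, hGdef, hQdef, hC1def, hC2def, Module.Basis.repr_self, Finsupp.single_apply, map_add, map_smul, map_neg, Finsupp.add_apply, Finsupp.smul_apply, Finsupp.neg_apply, smul_eq_mul, mul_zero, zero_mul, mul_one, reprCentral, ite_self]
      · rw [← hGdef s, hGG (-1) s]
        simp [hLdef, hHdef, hGdef, hQdef, hC1def, hC2def, Module.Basis.repr_self, Finsupp.single_apply, map_add, map_smul, map_neg, Finsupp.add_apply, Finsupp.smul_apply, Finsupp.neg_apply, smul_eq_mul, mul_zero, zero_mul, mul_one, reprCentral, ite_self]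
      · rw [← hQdef s, hGQ (-1) s]
        simp [hLdef, hHdef, hGdef, hQdef, hC1def, hC2def, Module.Basis.repr_self, Finsupp.single_apply, map_add, map_smul, map_neg, Finsupp.add_apply, Finsupp.smul_apply, Finsupp.neg_apply, smul_eq_mul, mul_zero, zero_mul, mul_one, reprCentral, ite_self]
    intro u
    simpa using LinearMap.congr_fun hfun u
  have F3s : ∀ (n : ℤ) (u : V), bV.repr (br u (L n)) (Sum.inl (Sum.inl (Sum.inl 0))) =
      (-2*(n:ℂ)) * bV.repr u (Sum.inl (Sum.inl (Sum.inl (-n)))) := by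
    intro n
    have hfun : (bV.coord (Sum.inl (Sum.inl (Sum.inl 0)))).comp (LinearMap.flip br (L n)) =
        (-2*(n:ℂ)) • bV.coord (Sum.inl (Sum.inl (Sum.inl (-n)))) := by
      refine bV.ext fun i => ?_
      simp only [LinearMap.coe_comp, Function.comp_apply, LinearMap.flip_apply,
        LinearMap.smul_apply, Module.Basis.coord_apply, smul_eq_mul]
      rcases i with (((s | s) | (⟨⟩ | ⟨⟩)) | (s | s))
      · rw [← hLdef s, hLL s n]
        by_cases h : s = -n
        · subst h
          simp [hLdef, hHdef, hGdef, hQdef, hC1def, hC2def, Module.Basis.repr_self, Finsupp.single_apply, map_add, map_smul, map_neg, Finsupp.add_apply, Finsupp.smul_apply, Finsupp.neg_apply, smul_eq_mul, mul_zero, zero_mul, mul_one, reprCentral, ite_self, show -n + n = 0 from by omega]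
          try push_cast
          try ring
        · simp [hLdef, hHdef, hGdef, hQdef, hC1def, hC2def, Module.Basis.repr_self, Finsupp.single_apply, map_add, map_smul, map_neg, Finsupp.add_apply, Finsupp.smul_apply, Finsupp.neg_apply, smul_eq_mul, mul_zero, zero_mul, mul_one, reprCentral, ite_self, h, show ¬(s + n = 0) from by omega]
      · rw [← hHdef s, brHL s n, hLH n s]
        simp [hLdef, hHdef, hGdef, hQdef, hC1def, hC2def, Module.Basis.repr_self, Finsupp.single_apply, map_add, map_smul, map_neg, Finsupp.add_apply, Finsupp.smul_apply, Finsupp.neg_apply, smul_eq_mul, mul_zero, zero_mul, mul_one, reprCentral, ite_self]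
      · rw [← hC1def, brC1v]
        simp [hLdef, hHdef, hGdef, hQdef, hC1def, hC2def, Module.Basis.repr_self, Finsupp.single_apply, map_add, map_smul, map_neg, Finsupp.add_apply, Finsupp.smul_apply, Finsupp.neg_apply, smul_eq_mul, mul_zero, zero_mul, mul_one, reprCentral, ite_self]
      · rw [← hC2def, brC2v]
        simp [hLdef, hHdef, hGdef, hQdef, hC1def, hC2def, Module.Basis.repr_self, Finsupp.single_apply, map_add, map_smul, map_neg, Finsupp.add_apply, Finsupp.smul_apply, Finsupp.neg_apply, smul_eq_mul, mul_zero, zero_mul, mul_one, reprCentral, ite_self]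
      · rw [← hGdef s, brGL s n, hLG n s]
        simp [hLdef, hHdef, hGdef, hQdef, hC1def, hC2def, Module.Basis.repr_self, Finsupp.single_apply, map_add, map_smul, map_neg, Finsupp.add_apply, Finsupp.smul_apply, Finsupp.neg_apply, smul_eq_mul, mul_zero, zero_mul, mul_one, reprCentral, ite_self]
      · rw [← hQdef s, brQL s n, hLQ n s]
        simp [hLdef, hHdef, hGdef, hQdef, hC1def, hC2def, Module.Basis.repr_self, Finsupp.single_apply, map_add, map_smul, map_neg, Finsupp.add_apply, Finsupp.smul_apply, Finsupp.neg_apply, smul_eq_mul, mul_zero, zero_mul, mul_one, reprCentral, ite_self]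
    intro u
    simpa using LinearMap.congr_fun hfun u
  have F4s : ∀ (n : ℤ) (u : V), bV.repr (br u (L n)) (Sum.inl (Sum.inl (Sum.inr 0))) =
      (-2*(n:ℂ)) * bV.repr u (Sum.inl (Sum.inl (Sum.inr (-n)))) := by
    intro n
    have hfun : (bV.coord (Sum.inl (Sum.inl (Sum.inr 0)))).comp (LinearMap.flip br (L n)) =
        (-2*(n:ℂ)) • bV.coord (Sum.inl (Sum.inl (Sum.inr (-n)))) := by
      refine bV.ext fun i => ?_
      simp only [LinearMap.coe_comp, Function.comp_apply, LinearMap.flip_apply,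
        LinearMap.smul_apply, Module.Basis.coord_apply, smul_eq_mul]
      rcases i with (((s | s) | (⟨⟩ | ⟨⟩)) | (s | s))
      · rw [← hLdef s, hLL s n]
        simp [hLdef, hHdef, hGdef, hQdef, hC1def, hC2def, Module.Basis.repr_self, Finsupp.single_apply, map_add, map_smul, map_neg, Finsupp.add_apply, Finsupp.smul_apply, Finsupp.neg_apply, smul_eq_mul, mul_zero, zero_mul, mul_one, reprCentral, ite_self]
      · rw [← hHdef s, brHL s n, hLH n s]
        by_cases h : s = -n
        · subst h
          simp [hLdef, hHdef, hGdef, hQdef, hC1def, hC2def, Module.Basis.repr_self, Finsupp.single_apply, map_add, map_smul, map_neg, Finsupp.add_apply, Finsupp.smul_apply, Finsupp.neg_apply, smul_eq_mul, mul_zero, zero_mul, mul_one, reprCentral, ite_self, show n + -n = 0 from by omega]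
          try push_cast
          try ring
        · simp [hLdef, hHdef, hGdef, hQdef, hC1def, hC2def, Module.Basis.repr_self, Finsupp.single_apply, map_add, map_smul, map_neg, Finsupp.add_apply, Finsupp.smul_apply, Finsupp.neg_apply, smul_eq_mul, mul_zero, zero_mul, mul_one, reprCentral, ite_self, h, show ¬(n + s = 0) from by omega]
      · rw [← hC1def, brC1v]
        simp [hLdef, hHdef, hGdef, hQdef, hC1def, hC2def, Module.Basis.repr_self, Finsupp.single_apply, map_add, map_smul, map_neg, Finsupp.add_apply, Finsupp.smul_apply, Finsupp.neg_apply, smul_eq_mul, mul_zero, zero_mul, mul_one, reprCentral, ite_self]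
      · rw [← hC2def, brC2v]
        simp [hLdef, hHdef, hGdef, hQdef, hC1def, hC2def, Module.Basis.repr_self, Finsupp.single_apply, map_add, map_smul, map_neg, Finsupp.add_apply, Finsupp.smul_apply, Finsupp.neg_apply, smul_eq_mul, mul_zero, zero_mul, mul_one, reprCentral, ite_self]
      · rw [← hGdef s, brGL s n, hLG n s]
        simp [hLdef, hHdef, hGdef, hQdef, hC1def, hC2def, Module.Basis.repr_self, Finsupp.single_apply, map_add, map_smul, map_neg, Finsupp.add_apply, Finsupp.smul_apply, Finsupp.neg_apply, smul_eq_mul, mul_zero, zero_mul, mul_one, reprCentral, ite_self]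
      · rw [← hQdef s, brQL s n, hLQ n s]
        simp [hLdef, hHdef, hGdef, hQdef, hC1def, hC2def, Module.Basis.repr_self, Finsupp.single_apply, map_add, map_smul, map_neg, Finsupp.add_apply, Finsupp.smul_apply, Finsupp.neg_apply, smul_eq_mul, mul_zero, zero_mul, mul_one, reprCentral, ite_self]
    intro u
    simpa using LinearMap.congr_fun hfun u
  -- reconstruction from C-coordinates
  have rec2 : ∀ v : V, (∀ j, j ≠ Sum.inl (Sum.inr (Sum.inl ())) → j ≠ Sum.inl (Sum.inr (Sum.inr ())) → bV.repr v j = 0) →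
      v = bV.repr v (Sum.inl (Sum.inr (Sum.inl ()))) • C1 + bV.repr v (Sum.inl (Sum.inr (Sum.inr ()))) • C2 := by
    intro v hv
    apply bV.repr.injective
    ext j
    rw [map_add, map_smul, map_smul]
    rw [hC1def, hC2def, Module.Basis.repr_self, Module.Basis.repr_self]
    simp only [Finsupp.add_apply, Finsupp.smul_apply, Finsupp.single_apply, smul_eq_mul]
    by_cases h1 : j = Sum.inl (Sum.inr (Sum.inl ()))
    · subst h1; simp
    · by_cases h2 : j = Sum.inl (Sum.inr (Sum.inr ()))
      · subst h2; simp
      · rw [hv j h1 h2, if_neg (fun hh => h1 hh.symm), if_neg (fun hh => h2 hh.symm)]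
        ring
  -- commutation with even elements
  have comm0 : ∀ (y : V), (∃ p, y ∈ Vsub p) → ∀ (x : V), x ∈ Vsub 0 → circ y x = circ x y := by
    rintro y ⟨p, hy⟩ x hx
    have h1 := hcomm p 0 y hy x hx
    rwa [mul_zero, sgn0, one_smul] at h1
  -- products with central elements have only central coordinates
  have centc : ∀ (Cv : V), Cv ∈ Vsub 0 → (∀ v : V, br v Cv = 0) →
      ∀ (x : V), (∃ p, x ∈ Vsub p) →
      (∀ j, j ≠ Sum.inl (Sum.inr (Sum.inl ())) → j ≠ Sum.inl (Sum.inr (Sum.inr ())) → bV.repr (circ x Cv) j = 0) := by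
    rintro Cv hCv hbrC x ⟨p, hx⟩
    have hbr : ∀ (y : V), (∃ q, y ∈ Vsub q) → br y (circ x Cv) = 0 := by
      rintro y ⟨q, hy⟩
      have h2 := hpost2 p q 0 x hx y hy Cv hCv
      rw [hbrC y, map_zero, hbrC (circ x y), zero_add] at h2
      exact (smul_eq_zero.mp h2.symm).resolve_left (sgnne _)
    have hL0 : br (L 0) (circ x Cv) = (0:ℂ) • circ x Cv := by
      rw [zero_smul]; exact hbr (L 0) ⟨0, memL 0⟩
    have hG1 : br (G (-1)) (circ x Cv) = 0 := hbr (G (-1)) ⟨1, memG (-1)⟩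
    have hL0c : bV.repr (circ x Cv) (Sum.inl (Sum.inl (Sum.inl 0))) = 0 := by
      have h := F1p (circ x Cv)
      rw [hG1] at h
      simp only [map_zero, Finsupp.coe_zero, Pi.zero_apply] at h
      have := h.symm
      field_simp at this
      linear_combination -this
    have hH0c : bV.repr (circ x Cv) (Sum.inl (Sum.inl (Sum.inr 0))) = 0 := by
      have h := F2p (circ x Cv)
      rw [hG1] at h
      simp only [map_zero, Finsupp.coe_zero, Pi.zero_apply] at h
      have := h.symm
      field_simp at this
      linear_combination -this
    rintro (((n | n) | (⟨⟩ | ⟨⟩)) | (k | k)) <;> intro hj1 hj2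
    · by_cases hn : n = 0
      · subst hn; exact hL0c
      · exact eig _ 0 hL0 _ (by simp [swWt, hn])
    · by_cases hn : n = 0
      · subst hn; exact hH0c
      · exact eig _ 0 hL0 _ (by simp [swWt, hn])
    · exact absurd rfl hj1
    · exact absurd rfl hj2
    · refine eig _ 0 hL0 _ ?_
      simp only [swWt]
      intro hc
      exact sw_int_ne_half 0 k (by push_cast; linear_combination hc)
    · refine eig _ 0 hL0 _ ?_
      simp only [swWt]
      intro hc
      exact sw_int_ne_half 0 k (by push_cast; linear_combination hc)
  have circxC1 : ∀ (x : V), (∃ p, x ∈ Vsub p) → ∃ γ δ : ℂ, circ x C1 = γ • C1 + δ • C2 :=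
    fun x hx => ⟨_, _, rec2 (circ x C1) (centc C1 memC1 hxC1 x hx)⟩
  have circxC2 : ∀ (x : V), (∃ p, x ∈ Vsub p) → ∃ γ δ : ℂ, circ x C2 = γ • C1 + δ • C2 :=
    fun x hx => ⟨_, _, rec2 (circ x C2) (centc C2 memC2 hxC2 x hx)⟩
  -- central elements act trivially
  have circCgen : ∀ (Cv : V), Cv ∈ Vsub 0 → (∀ v, br Cv v = 0) →
      (∀ x : V, (∃ p, x ∈ Vsub p) → ∃ γ δ : ℂ, circ x Cv = γ • C1 + δ • C2) →
      ∀ v, circ Cv v = 0 := by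
    intro Cv hCv hbrl hcent
    have Dbr : ∀ (y : V), (∃ q, y ∈ Vsub q) → ∀ (z : V), (∃ t, z ∈ Vsub t) →
        circ Cv (br y z) = 0 := by
      rintro y ⟨q, hyq⟩ z ⟨t, hzt⟩
      have h2 := hpost2 0 q t Cv hCv y hyq z hzt
      rw [zero_mul, sgn0, one_smul] at h2
      obtain ⟨γ, δ, hγ⟩ := hcent y ⟨q, hyq⟩
      obtain ⟨γ', δ', hγ'⟩ := hcent z ⟨t, hzt⟩
      have e1 : circ Cv y = γ • C1 + δ • C2 := by
        rw [← comm0 y ⟨q, hyq⟩ Cv hCv]; exact hγ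
      have e2 : circ Cv z = γ' • C1 + δ' • C2 := by
        rw [← comm0 z ⟨t, hzt⟩ Cv hCv]; exact hγ'
      rw [h2, e1, e2]
      simp [map_add, map_smul, LinearMap.add_apply, LinearMap.smul_apply,
        brC1v, brC2v, hxC1, hxC2, smul_zero]
    have hDL : ∀ m : ℤ, m ≠ 0 → circ Cv (L m) = 0 := by
      intro m hm
      have hb : br (L m) (L 0) = (m:ℂ) • L m := by
        rw [hLL m 0, if_neg (show ¬(m + 0 = 0) by omega)]
        norm_num
      have h := Dbr (L m) ⟨0, memL m⟩ (L 0) ⟨0, memL 0⟩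
      rw [hb, map_smul] at h
      exact (smul_eq_zero.mp h).resolve_left (Int.cast_ne_zero.mpr hm)
    have hDH : ∀ m : ℤ, m ≠ 0 → circ Cv (H m) = 0 := by
      intro m hm
      have hb : br (L m) (H 0) = (m:ℂ) • H m := by
        rw [hLH m 0, if_neg (show ¬(m + 0 = 0) by omega)]
        norm_num
      have h := Dbr (L m) ⟨0, memL m⟩ (H 0) ⟨0, memH 0⟩
      rw [hb, map_smul] at h
      exact (smul_eq_zero.mp h).resolve_left (Int.cast_ne_zero.mpr hm)
    have hDG : ∀ k : ℤ, circ Cv (G k) = 0 := by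
      intro k
      have h := Dbr (L 0) ⟨0, memL 0⟩ (G k) ⟨1, memG k⟩
      rw [hbrL0G k, map_smul] at h
      refine (smul_eq_zero.mp h).resolve_left ?_
      intro hc
      exact sw_int_ne_half 0 k (by push_cast; linear_combination hc)
    have hDQ : ∀ k : ℤ, circ Cv (Q k) = 0 := by
      intro k
      have h := Dbr (L 0) ⟨0, memL 0⟩ (Q k) ⟨1, memQ k⟩
      rw [hbrL0Q k, map_smul] at h
      refine (smul_eq_zero.mp h).resolve_left ?_
      intro hc
      exact sw_int_ne_half 0 k (by push_cast; linear_combination hc)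
    have hDL0 : circ Cv (L 0) = 0 := by
      have hb : br (G (-1)) (G 0) = (2:ℂ) • L 0 := by
        rw [hGG (-1) 0]
        norm_num
      have h := Dbr (G (-1)) ⟨1, memG (-1)⟩ (G 0) ⟨1, memG 0⟩
      rw [hb, map_smul] at h
      exact (smul_eq_zero.mp h).resolve_left (by norm_num)
    have hDH0 : circ Cv (H 0) = 0 := by
      have hb : br (G (-1)) (Q 0) = (2:ℂ) • H 0 := by
        rw [hGQ (-1) 0]
        norm_num
      have h := Dbr (G (-1)) ⟨1, memG (-1)⟩ (Q 0) ⟨1, memQ 0⟩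
      rw [hb, map_smul] at h
      exact (smul_eq_zero.mp h).resolve_left (by norm_num)
    have hDC1 : circ Cv C1 = 0 := by
      have hb : br (L 2) (L (-2)) = (4:ℂ) • L 0 + (1/2 : ℂ) • C1 := by
        rw [hLL 2 (-2)]
        norm_num
      have h := Dbr (L 2) ⟨0, memL 2⟩ (L (-2)) ⟨0, memL (-2)⟩
      rw [hb, map_add, map_smul, map_smul, hDL0, smul_zero, zero_add] at h
      exact (smul_eq_zero.mp h).resolve_left (by norm_num)
    have hDC2 : circ Cv C2 = 0 := by
      have hb : br (L 2) (H (-2)) = (4:ℂ) • H 0 + (1/2 : ℂ) • C2 := by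
        rw [hLH 2 (-2)]
        norm_num
      have h := Dbr (L 2) ⟨0, memL 2⟩ (H (-2)) ⟨0, memH (-2)⟩
      rw [hb, map_add, map_smul, map_smul, hDH0, smul_zero, zero_add] at h
      exact (smul_eq_zero.mp h).resolve_left (by norm_num)
    have hmap : circ Cv = (0 : V →ₗ[ℂ] V) := by
      refine bV.ext fun i => ?_
      rcases i with (((n | n) | (⟨⟩ | ⟨⟩)) | (k | k))
      · rw [← hLdef n]
        by_cases hn : n = 0
        · subst hn; simpa using hDL0
        · simpa using hDL n hn
      · rw [← hHdef n]
        by_cases hn : n = 0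
        · subst hn; simpa using hDH0
        · simpa using hDH n hn
      · rw [← hC1def]; simpa using hDC1
      · rw [← hC2def]; simpa using hDC2
      · rw [← hGdef k]; simpa using hDG k
      · rw [← hQdef k]; simpa using hDQ k
    intro v; rw [hmap]; rfl
  have circC1v : ∀ v, circ C1 v = 0 := circCgen C1 memC1 brC1v circxC1
  have circC2v : ∀ v, circ C2 v = 0 := circCgen C2 memC2 brC2v circxC2
  have circxC1z : ∀ (x : V), (∃ p, x ∈ Vsub p) → circ x C1 = 0 := fun x hx => by
    rw [comm0 x hx C1 memC1]; exact circC1v x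
  have circxC2z : ∀ (x : V), (∃ p, x ∈ Vsub p) → circ x C2 = 0 := fun x hx => by
    rw [comm0 x hx C2 memC2]; exact circC2v x
  -- the fundamental identity with y = L 0
  have ID1 : ∀ (x : V), (∃ p, x ∈ Vsub p) → ∀ (z : V), (∃ t, z ∈ Vsub t) →
      circ x (br (L 0) z) = br (circ (L 0) x) z + br (L 0) (circ x z) := by
    rintro x ⟨p, hx⟩ z ⟨t, hz⟩
    have h2 := hpost2 p 0 t x hx (L 0) (memL 0) z hz
    rw [mul_zero, sgn0, one_smul] at h2
    rw [h2, comm0 x ⟨p, hx⟩ (L 0) (memL 0)]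
  -- the L0- and H0- coefficients of circ (L 0) x vanish
  have CEN : ∀ (x : V), (∃ p, x ∈ Vsub p) →
      bV.repr (circ (L 0) x) (Sum.inl (Sum.inl (Sum.inl 0))) = 0 ∧
      bV.repr (circ (L 0) x) (Sum.inl (Sum.inl (Sum.inr 0))) = 0 := by
    intro x hx
    have hid := ID1 x hx (G (-1)) ⟨1, memG (-1)⟩
    rw [hbrL0G (-1), map_smul] at hid
    constructor
    · have h := congrArg (fun v => bV.repr v (Sum.inr (Sum.inl (-1)))) hid
      simp only [map_smul, map_add, Finsupp.smul_apply, Finsupp.add_apply, smul_eq_mul] at h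
      rw [diag, F1s] at h
      simp only [swWt] at h
      push_cast at h
      linear_combination -2 * h
    · have h := congrArg (fun v => bV.repr v (Sum.inr (Sum.inr (-1)))) hid
      simp only [map_smul, map_add, Finsupp.smul_apply, Finsupp.add_apply, smul_eq_mul] at h
      rw [diag, F2s] at h
      simp only [swWt] at h
      push_cast at h
      linear_combination -2 * h
  -- t := circ (L 0) (L 0) is central (only C-coordinates)
  have tC : ∀ j, j ≠ Sum.inl (Sum.inr (Sum.inl ())) → j ≠ Sum.inl (Sum.inr (Sum.inr ())) →
      bV.repr (circ (L 0) (L 0)) j = 0 := by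
    rintro (((n | n) | (⟨⟩ | ⟨⟩)) | (k | k)) <;> intro hj1 hj2
    · by_cases hn : n = 0
      · subst hn; exact (CEN (L 0) ⟨0, memL 0⟩).1
      · have hid := ID1 (L 0) ⟨0, memL 0⟩ (L (-n)) ⟨0, memL (-n)⟩
        rw [hbrL0L (-n), map_smul] at hid
        have h := congrArg (fun v => bV.repr v (Sum.inl (Sum.inl (Sum.inl 0)))) hid
        simp only [map_smul, map_add, Finsupp.smul_apply, Finsupp.add_apply, smul_eq_mul] at h
        rw [diag, F3s, (CEN (L (-n)) ⟨0, memL (-n)⟩).1] at h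
        simp only [neg_neg, swWt, mul_zero, zero_add, add_zero] at h
        have h2 := h.symm
        refine (mul_eq_zero.mp h2).resolve_left ?_
        intro hc
        have : (n:ℂ) = 0 := by push_cast at hc; linear_combination hc/2
        exact hn (by exact_mod_cast this)
    · by_cases hn : n = 0
      · subst hn; exact (CEN (L 0) ⟨0, memL 0⟩).2
      · have hid := ID1 (L 0) ⟨0, memL 0⟩ (L (-n)) ⟨0, memL (-n)⟩
        rw [hbrL0L (-n), map_smul] at hid
        have h := congrArg (fun v => bV.repr v (Sum.inl (Sum.inl (Sum.inr 0)))) hid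
        simp only [map_smul, map_add, Finsupp.smul_apply, Finsupp.add_apply, smul_eq_mul] at h
        rw [diag, F4s, (CEN (L (-n)) ⟨0, memL (-n)⟩).2] at h
        simp only [neg_neg, swWt, mul_zero, zero_add, add_zero] at h
        have h2 := h.symm
        refine (mul_eq_zero.mp h2).resolve_left ?_
        intro hc
        have : (n:ℂ) = 0 := by push_cast at hc; linear_combination hc/2
        exact hn (by exact_mod_cast this)
    · exact absurd rfl hj1
    · exact absurd rfl hj2
    · have hid := ID1 (L 0) ⟨0, memL 0⟩ (G (-k-1)) ⟨1, memG (-k-1)⟩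
      rw [hbrL0G (-k-1), map_smul] at hid
      have h := congrArg (fun v => bV.repr v (Sum.inl (Sum.inl (Sum.inl 0)))) hid
      simp only [map_smul, map_add, Finsupp.smul_apply, Finsupp.add_apply, smul_eq_mul] at h
      rw [diag, F5, (CEN (G (-k-1)) ⟨1, memG (-k-1)⟩).1] at h
      simp only [show (0:ℤ) - (-k-1) - 1 = k from by ring, swWt, mul_zero, zero_add, add_zero] at h
      have h2 := h.symm
      exact (mul_eq_zero.mp h2).resolve_left (by norm_num)
    · have hid := ID1 (L 0) ⟨0, memL 0⟩ (G (-k-1)) ⟨1, memG (-k-1)⟩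
      rw [hbrL0G (-k-1), map_smul] at hid
      have h := congrArg (fun v => bV.repr v (Sum.inl (Sum.inl (Sum.inr 0)))) hid
      simp only [map_smul, map_add, Finsupp.smul_apply, Finsupp.add_apply, smul_eq_mul] at h
      rw [diag, F6, (CEN (G (-k-1)) ⟨1, memG (-k-1)⟩).2] at h
      simp only [show (0:ℤ) - (-k-1) - 1 = k from by ring, swWt, mul_zero, zero_add, add_zero] at h
      have h2 := h.symm
      exact (mul_eq_zero.mp h2).resolve_left (by norm_num)
  have brT : ∀ v : V, br (circ (L 0) (L 0)) v = 0 := by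
    intro v
    have trec := rec2 (circ (L 0) (L 0)) tC
    rw [trec]
    simp [map_add, map_smul, LinearMap.add_apply, LinearMap.smul_apply, brC1v, brC2v, smul_zero]
  -- localization of circ (L 0) on G k / Q k
  have A0Gloc : ∀ k : ℤ, br (L 0) (circ (L 0) (G k)) = (-((k:ℂ)+1/2)) • circ (L 0) (G k) := by
    intro k
    have hid := ID1 (L 0) ⟨0, memL 0⟩ (G k) ⟨1, memG k⟩
    rw [hbrL0G k, map_smul, brT, zero_add] at hid
    exact hid.symm
  have A0Qloc : ∀ k : ℤ, br (L 0) (circ (L 0) (Q k)) = (-((k:ℂ)+1/2)) • circ (L 0) (Q k) := by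
    intro k
    have hid := ID1 (L 0) ⟨0, memL 0⟩ (Q k) ⟨1, memQ k⟩
    rw [hbrL0Q k, map_smul, brT, zero_add] at hid
    exact hid.symm
  have wGG : ∀ k : ℤ, circ (G k) (G k) = 0 := by
    intro k
    have h := hcomm 1 1 (G k) (memG k) (G k) (memG k)
    rw [mul_one, sgn1, neg_smul, one_smul] at h
    have h2 : (2:ℂ) • circ (G k) (G k) = 0 := by
      rw [two_smul]
      nth_rewrite 1 [h]
      simp
    exact (smul_eq_zero.mp h2).resolve_left (by norm_num)
  have brA0G_G : ∀ k : ℤ, br (circ (L 0) (G k)) (G k) = 0 := by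
    intro k
    have hid := ID1 (G k) ⟨1, memG k⟩ (G k) ⟨1, memG k⟩
    rw [hbrL0G k, map_smul, wGG k, smul_zero, map_zero, add_zero] at hid
    exact hid.symm
  have A0G : ∀ k : ℤ, circ (L 0) (G k) = 0 := by
    intro k
    have hloc := A0Gloc k
    have hG : bV.repr (circ (L 0) (G k)) (Sum.inr (Sum.inl k)) = 0 := by
      have h := F5 k (2*k+1) (circ (L 0) (G k))
      rw [brA0G_G k] at h
      simp only [map_zero, Finsupp.coe_zero, Pi.zero_apply,
        show 2*k+1-k-1 = k from by ring] at h
      have h2 := h.symm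
      exact (mul_eq_zero.mp h2).resolve_left (by norm_num)
    have hQ : bV.repr (circ (L 0) (G k)) (Sum.inr (Sum.inr k)) = 0 := by
      have h := F6 k (2*k+1) (circ (L 0) (G k))
      rw [brA0G_G k] at h
      simp only [map_zero, Finsupp.coe_zero, Pi.zero_apply,
        show 2*k+1-k-1 = k from by ring] at h
      have h2 := h.symm
      exact (mul_eq_zero.mp h2).resolve_left (by norm_num)
    have hc : bV.repr (circ (L 0) (G k)) = 0 := by
      ext j
      rcases j with (((n | n) | (⟨⟩ | ⟨⟩)) | (n | n))
      · refine eig _ _ hloc _ ?_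
        simp only [swWt]
        intro hcc
        exact sw_int_ne_half n k (by linear_combination -hcc)
      · refine eig _ _ hloc _ ?_
        simp only [swWt]
        intro hcc
        exact sw_int_ne_half n k (by linear_combination -hcc)
      · refine eig _ _ hloc _ ?_
        simp only [swWt]
        intro hcc
        exact sw_int_ne_half 0 k (by push_cast; linear_combination -hcc)
      · refine eig _ _ hloc _ ?_
        simp only [swWt]
        intro hcc
        exact sw_int_ne_half 0 k (by push_cast; linear_combination -hcc)
      · by_cases hn : n = k
        · subst hn; exact hG
        · refine eig _ _ hloc _ ?_
          simp only [swWt]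
          intro hcc
          exact hn (by exact_mod_cast (show (n:ℂ) = k from by linear_combination -hcc))
      · by_cases hn : n = k
        · subst hn; exact hQ
        · refine eig _ _ hloc _ ?_
          simp only [swWt]
          intro hcc
          exact hn (by exact_mod_cast (show (n:ℂ) = k from by linear_combination -hcc))
    exact (LinearEquiv.map_eq_zero_iff bV.repr).mp hc
  have brA0Q_G : ∀ k : ℤ, br (circ (L 0) (Q k)) (G k) = 0 := by
    intro k
    have hE1 := ID1 (G k) ⟨1, memG k⟩ (Q k) ⟨1, memQ k⟩
    rw [hbrL0Q k, map_smul, A0G k] at hE1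
    simp only [map_zero, LinearMap.zero_apply, zero_add] at hE1
    have hcm := hcomm 1 1 (Q k) (memQ k) (G k) (memG k)
    rw [mul_one, sgn1, neg_smul, one_smul] at hcm
    have hE2 := ID1 (Q k) ⟨1, memQ k⟩ (G k) ⟨1, memG k⟩
    rw [hbrL0G k, map_smul, hcm, map_neg, smul_neg] at hE2
    rw [← hE1] at hE2
    -- hE2 : -(c • w) = br (circ (L 0) (Q k)) (G k) + -(c • w)
    have h0 := hE2.symm
    rwa [add_eq_right] at h0
  have A0Q : ∀ k : ℤ, circ (L 0) (Q k) = 0 := by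
    intro k
    have hloc := A0Qloc k
    have hG : bV.repr (circ (L 0) (Q k)) (Sum.inr (Sum.inl k)) = 0 := by
      have h := F5 k (2*k+1) (circ (L 0) (Q k))
      rw [brA0Q_G k] at h
      simp only [map_zero, Finsupp.coe_zero, Pi.zero_apply,
        show 2*k+1-k-1 = k from by ring] at h
      have h2 := h.symm
      exact (mul_eq_zero.mp h2).resolve_left (by norm_num)
    have hQ : bV.repr (circ (L 0) (Q k)) (Sum.inr (Sum.inr k)) = 0 := by
      have h := F6 k (2*k+1) (circ (L 0) (Q k))
      rw [brA0Q_G k] at h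
      simp only [map_zero, Finsupp.coe_zero, Pi.zero_apply,
        show 2*k+1-k-1 = k from by ring] at h
      have h2 := h.symm
      exact (mul_eq_zero.mp h2).resolve_left (by norm_num)
    have hc : bV.repr (circ (L 0) (Q k)) = 0 := by
      ext j
      rcases j with (((n | n) | (⟨⟩ | ⟨⟩)) | (n | n))
      · refine eig _ _ hloc _ ?_
        simp only [swWt]
        intro hcc
        exact sw_int_ne_half n k (by linear_combination -hcc)
      · refine eig _ _ hloc _ ?_
        simp only [swWt]
        intro hcc
        exact sw_int_ne_half n k (by linear_combination -hcc)
      · refine eig _ _ hloc _ ?_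
        simp only [swWt]
        intro hcc
        exact sw_int_ne_half 0 k (by push_cast; linear_combination -hcc)
      · refine eig _ _ hloc _ ?_
        simp only [swWt]
        intro hcc
        exact sw_int_ne_half 0 k (by push_cast; linear_combination -hcc)
      · by_cases hn : n = k
        · subst hn; exact hG
        · refine eig _ _ hloc _ ?_
          simp only [swWt]
          intro hcc
          exact hn (by exact_mod_cast (show (n:ℂ) = k from by linear_combination -hcc))
      · by_cases hn : n = k
        · subst hn; exact hQ
        · refine eig _ _ hloc _ ?_
          simp only [swWt]
          intro hcc
          exact hn (by exact_mod_cast (show (n:ℂ) = k from by linear_combination -hcc))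
    exact (LinearEquiv.map_eq_zero_iff bV.repr).mp hc
  have A0L : ∀ m : ℤ, circ (L 0) (L m) = 0 := by
    intro m
    have h2 := hpost2 0 1 1 (L 0) (memL 0) (G (3*m+1)) (memG _) (G (-2*m-2)) (memG _)
    rw [zero_mul, sgn0, one_smul, A0G, A0G, hGG,
      show 3*m+1 + (-2*m-2) + 1 = m from by ring] at h2
    simp only [map_add, map_smul, map_zero, LinearMap.zero_apply, add_zero] at h2
    rw [circxC1z (L 0) ⟨0, memL 0⟩, smul_zero, add_zero] at h2
    exact (smul_eq_zero.mp h2).resolve_left (by norm_num)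
  have A0H : ∀ m : ℤ, circ (L 0) (H m) = 0 := by
    intro m
    have h2 := hpost2 0 1 1 (L 0) (memL 0) (G (3*m+1)) (memG _) (Q (-2*m-2)) (memQ _)
    rw [zero_mul, sgn0, one_smul, A0G, A0Q, hGQ,
      show 3*m+1 + (-2*m-2) + 1 = m from by ring] at h2
    simp only [map_add, map_smul, map_zero, LinearMap.zero_apply, add_zero] at h2
    rw [circxC2z (L 0) ⟨0, memL 0⟩, smul_zero, add_zero] at h2
    exact (smul_eq_zero.mp h2).resolve_left (by norm_num)
  have A0map : circ (L 0) = (0 : V →ₗ[ℂ] V) := by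
    refine bV.ext fun i => ?_
    rcases i with (((n | n) | (⟨⟩ | ⟨⟩)) | (n | n))
    · rw [← hLdef n]; simpa using A0L n
    · rw [← hHdef n]; simpa using A0H n
    · rw [← hC1def]; simpa using circxC1z (L 0) ⟨0, memL 0⟩
    · rw [← hC2def]; simpa using circxC2z (L 0) ⟨0, memL 0⟩
    · rw [← hGdef n]; simpa using A0G n
    · rw [← hQdef n]; simpa using A0Q n
  -- all left multiplications vanish
  have phiL : ∀ m : ℤ, circ (L m) = (0 : V →ₗ[ℂ] V) := by
    intro m
    by_cases hm : m = 0
    · subst hm; exact A0map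
    · refine bV.ext fun i => ?_
      obtain ⟨t, ht⟩ := hPb i
      have h1 := hpost1 0 0 t (L m) (memL m) (L 0) (memL 0) (bV i) ht
      rw [mul_zero, sgn0, one_smul, A0map] at h1
      simp only [LinearMap.zero_apply, map_zero, sub_zero] at h1
      have hb : br (L m) (L 0) = (m:ℂ) • L m := by
        rw [hLL m 0, if_neg (show ¬(m + 0 = 0) by omega)]
        norm_num
      rw [hb, map_smul] at h1
      simp only [LinearMap.smul_apply] at h1
      have h2 := (smul_eq_zero.mp h1).resolve_left (Int.cast_ne_zero.mpr hm)
      simpa using h2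
  have phiG : ∀ k : ℤ, circ (G k) = (0 : V →ₗ[ℂ] V) := by
    intro k
    refine bV.ext fun i => ?_
    obtain ⟨t, ht⟩ := hPb i
    have h1 := hpost1 1 0 t (G k) (memG k) (L 0) (memL 0) (bV i) ht
    rw [mul_zero, sgn0, one_smul, A0map] at h1
    simp only [LinearMap.zero_apply, map_zero, sub_zero] at h1
    have hb : br (G k) (L 0) = ((k:ℂ)+1/2) • G k := by
      rw [brGL k 0, hbrL0G k, ← neg_smul, neg_neg]
    rw [hb, map_smul] at h1
    simp only [LinearMap.smul_apply] at h1
    have hne : ((k:ℂ)+1/2) ≠ 0 := by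
      intro hcc
      exact sw_int_ne_half 0 k (by push_cast; linear_combination -hcc)
    have h2 := (smul_eq_zero.mp h1).resolve_left hne
    simpa using h2
  have phiQ : ∀ k : ℤ, circ (Q k) = (0 : V →ₗ[ℂ] V) := by
    intro k
    refine bV.ext fun i => ?_
    obtain ⟨t, ht⟩ := hPb i
    have h1 := hpost1 1 0 t (Q k) (memQ k) (L 0) (memL 0) (bV i) ht
    rw [mul_zero, sgn0, one_smul, A0map] at h1
    simp only [LinearMap.zero_apply, map_zero, sub_zero] at h1
    have hb : br (Q k) (L 0) = ((k:ℂ)+1/2) • Q k := by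
      rw [brQL k 0, hbrL0Q k, ← neg_smul, neg_neg]
    rw [hb, map_smul] at h1
    simp only [LinearMap.smul_apply] at h1
    have hne : ((k:ℂ)+1/2) ≠ 0 := by
      intro hcc
      exact sw_int_ne_half 0 k (by push_cast; linear_combination -hcc)
    have h2 := (smul_eq_zero.mp h1).resolve_left hne
    simpa using h2
  have phiH : ∀ m : ℤ, circ (H m) = (0 : V →ₗ[ℂ] V) := by
    intro m
    by_cases hm : m = 0
    · subst hm
      refine bV.ext fun i => ?_
      obtain ⟨t, ht⟩ := hPb i
      have h1 := hpost1 1 1 t (G (-1)) (memG (-1)) (Q 0) (memQ 0) (bV i) ht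
      rw [mul_one, sgn1, phiQ 0, phiG (-1)] at h1
      simp only [LinearMap.zero_apply, map_zero, neg_smul, one_smul, smul_zero,
        sub_zero, zero_sub, neg_zero] at h1
      have hb : br (G (-1)) (Q 0) = (2:ℂ) • H 0 := by
        rw [hGQ (-1) 0]
        norm_num
      rw [hb, map_smul] at h1
      simp only [LinearMap.smul_apply] at h1
      have h2 := (smul_eq_zero.mp h1).resolve_left (by norm_num : (2:ℂ) ≠ 0)
      simpa using h2
    · refine bV.ext fun i => ?_
      obtain ⟨t, ht⟩ := hPb i
      have h1 := hpost1 0 0 t (H m) (memH m) (L 0) (memL 0) (bV i) ht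
      rw [mul_zero, sgn0, one_smul, A0map] at h1
      simp only [LinearMap.zero_apply, map_zero, sub_zero] at h1
      have hb : br (H m) (L 0) = (m:ℂ) • H m := by
        rw [brHL m 0, hbrL0H m]
        simp
      rw [hb, map_smul] at h1
      simp only [LinearMap.smul_apply] at h1
      have h2 := (smul_eq_zero.mp h1).resolve_left (Int.cast_ne_zero.mpr hm)
      simpa using h2
  have final : circ = (0 : V →ₗ[ℂ] V →ₗ[ℂ] V) := by
    refine bV.ext fun i => ?_
    rcases i with (((n | n) | (⟨⟩ | ⟨⟩)) | (n | n))
    · rw [← hLdef n]; simpa using phiL n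
    · rw [← hHdef n]; simpa using phiH n
    · rw [← hC1def]
      have : circ C1 = (0 : V →ₗ[ℂ] V) := LinearMap.ext circC1v
      simpa using this
    · rw [← hC2def]
      have : circ C2 = (0 : V →ₗ[ℂ] V) := LinearMap.ext circC2v
      simpa using this
    · rw [← hGdef n]; simpa using phiG n
    · rw [← hQdef n]; simpa using phiQ n
  intro x y
  rw [final]
  rfl
end
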